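/- arXiv:2401.17218 — 5 statements merged into one kernel-verified Lean document; each statement's English description precedes it below -/
import Mathlib

section
/- The m-th sequential distributional topological complexity dTC_m is a homotopy invariant: if f : X → Y is a homotopy domination (i.e., f admits a right homotopy inverse g : Y → X with f ∘ g homotopic to the identity of Y), then dTC_m(Y) ≤ dTC_m(X). In particular, homotopy equivalent path-connected metric spaces have equal dTC_m for every m ≥ 2. -/
open MeasureTheory unitInterval

noncomputable section

/-- The path space `P(X) = C([0,1], X)` with the compact-open topology. -/
abbrev PathSp (X : Type*) [TopologicalSpace X] : Type _ := C(unitInterval, X)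

/-- The space `B_n(Z)` of probability measures on a metric space `Z` supported on at most
`n` points, as a subspace of the space of probability measures with the Lévy–Prokhorov metric. -/
def Bmeas (n : ℕ) (Z : Type*) [MetricSpace Z] : Type _ :=
  letI : MeasurableSpace Z := borel Z
  {μ : LevyProkhorov (ProbabilityMeasure Z) //
    ∃ S : Finset Z, S.card ≤ n ∧ (LevyProkhorov.toMeasureEquiv μ : ProbabilityMeasure Z) (↑S : Set Z) = 1}

noncomputable instance (n : ℕ) (Z : Type*) [MetricSpace Z] : TopologicalSpace (Bmeas n Z) :=
  letI : MeasurableSpace Z := borel Z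
  haveI : BorelSpace Z := ⟨rfl⟩
  instTopologicalSpaceSubtype

/-- The underlying probability measure of an element of `B_n(Z)`. -/
def Bmeas.meas {n : ℕ} {Z : Type*} [MetricSpace Z] (μ : Bmeas n Z) :
    @ProbabilityMeasure Z (borel Z) :=
  LevyProkhorov.toMeasureEquiv μ.1

/-- `μ ∈ B_n(Z)` is supported on the set `A`. -/
def DistributedOn {Z : Type*} [MetricSpace Z] {n : ℕ} (μ : Bmeas n Z) (A : Set Z) : Prop :=
  ∃ S : Finset Z, (↑S : Set Z) ⊆ A ∧ Bmeas.meas μ (↑S : Set Z) = 1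

/-! ### Auxiliary measure lemmas -/

theorem prob_coeFn_eq_one {Z : Type*} {m : MeasurableSpace Z} (ν : ProbabilityMeasure Z)
    {A : Set Z} : ν A = 1 ↔ ν.toMeasure A = 1 := by
  rw [← ProbabilityMeasure.ennreal_coeFn_eq_coeFn_toMeasure]
  exact_mod_cast (ENNReal.coe_eq_one (r := ν A)).symm

theorem prob_coeFn_eq_zero {Z : Type*} {m : MeasurableSpace Z} (ν : ProbabilityMeasure Z)
    {A : Set Z} : ν A = 0 ↔ ν.toMeasure A = 0 := by
  rw [← ProbabilityMeasure.ennreal_coeFn_eq_coeFn_toMeasure]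
  exact_mod_cast Iff.symm ENNReal.coe_eq_zero

theorem finsupp_aemeasurable_and_map {Z W : Type*} [MeasurableSpace Z]
    [MeasurableSingletonClass Z] [MeasurableSpace W] (μ : Measure Z) (S : Finset Z)
    (hS : μ ((↑S : Set Z)ᶜ) = 0) (hne : S.Nonempty) (F : Z → W) :
    AEMeasurable F μ ∧
      ∀ B : Set W, MeasurableSet B → μ.map F B = μ ((↑S : Set Z) ∩ F ⁻¹' B) := by
  classical
  obtain ⟨z₀, hz₀⟩ := hne
  set g : Z → W := fun z => if z ∈ S then F z else F z₀ with hg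
  have hgm : Measurable g := by
    intro t ht
    have hpre : g ⁻¹' t =
        ((↑S : Set Z) ∩ F ⁻¹' t) ∪ ((↑S : Set Z)ᶜ ∩ (if F z₀ ∈ t then Set.univ else ∅)) := by
      ext z
      by_cases hz : z ∈ S
      · simp [g, hz]
      · by_cases h0 : F z₀ ∈ t <;> simp [g, hz, h0]
    rw [hpre]
    refine MeasurableSet.union ?_ ?_
    · exact (S.finite_toSet.inter_of_left _).measurableSet
    · exact (S.finite_toSet.measurableSet.compl).inter (by split <;> simp)
  have hFg : ∀ z ∈ (↑S : Set Z), F z = g z := by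
    intro z hz
    rw [hg]
    simp [Finset.mem_coe.mp hz]
  have hae : F =ᵐ[μ] g := by
    refine measure_mono_null ?_ hS
    intro z hz
    simp only [Set.mem_setOf_eq, Set.mem_compl_iff, Finset.mem_coe]
    intro hzS
    exact hz (hFg z hzS)
  have hmap : μ.map F = μ.map g := Measure.map_congr hae
  refine ⟨⟨g, hgm, hae⟩, fun B hB => ?_⟩
  rw [hmap, Measure.map_apply hgm hB]
  have h1 : μ (g ⁻¹' B) = μ (g ⁻¹' B ∩ (↑S : Set Z)) := (measure_inter_conull hS).symm
  have h2 : g ⁻¹' B ∩ (↑S : Set Z) = (↑S : Set Z) ∩ F ⁻¹' B := by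
    ext z
    constructor
    · rintro ⟨hzB, hzS⟩
      exact ⟨hzS, by simpa [hFg z hzS] using hzB⟩
    · rintro ⟨hzS, hzB⟩
      exact ⟨by simpa [← hFg z hzS] using hzB, hzS⟩
  rw [h1, h2]

theorem supp_nonempty {Z : Type*} [MeasurableSpace Z] (μ : Measure Z) [IsProbabilityMeasure μ]
    (S : Finset Z) (hS : μ ((↑S : Set Z)ᶜ) = 0) : S.Nonempty := by
  rcases S.eq_empty_or_nonempty with h | h
  · exfalso
    rw [h] at hS
    simp only [Finset.coe_empty, Set.compl_empty] at hS
    exact one_ne_zero ((measure_univ (μ := μ)).symm.trans hS)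
  · exact h

/-! ### Bmeas API -/

section BmeasAPI

variable {n : ℕ} {Z W : Type*} [MetricSpace Z] [MetricSpace W]

theorem Bmeas.exists_supp (μ : Bmeas n Z) :
    ∃ S : Finset Z, S.card ≤ n ∧ Bmeas.meas μ (↑S : Set Z) = 1 := μ.2

theorem Bmeas.compl_zero' {μ : Bmeas n Z} {S : Finset Z}
    (hS : Bmeas.meas μ (↑S : Set Z) = 1) :
    letI : MeasurableSpace Z := borel Z
    (Bmeas.meas μ).toMeasure ((↑S : Set Z)ᶜ) = 0 := by
  letI : MeasurableSpace Z := borel Z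
  haveI : BorelSpace Z := ⟨rfl⟩
  rw [prob_compl_eq_zero_iff S.finite_toSet.measurableSet]
  exact (prob_coeFn_eq_one _).mp hS

/-- Pushforward of a finitely supported probability measure along an arbitrary map. -/
def Bmeas.push (F : Z → W) (μ : Bmeas n Z) : Bmeas n W :=
  letI : MeasurableSpace Z := borel Z
  haveI : BorelSpace Z := ⟨rfl⟩
  letI : MeasurableSpace W := borel W
  haveI : BorelSpace W := ⟨rfl⟩
  let S := (Bmeas.exists_supp μ).choose
  have hcard : S.card ≤ n := (Bmeas.exists_supp μ).choose_spec.1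
  have hS : Bmeas.meas μ (↑S : Set Z) = 1 := (Bmeas.exists_supp μ).choose_spec.2
  have hc : (Bmeas.meas μ).toMeasure ((↑S : Set Z)ᶜ) = 0 := Bmeas.compl_zero' hS
  have hne : S.Nonempty := supp_nonempty _ S hc
  have hF : AEMeasurable F (Bmeas.meas μ).toMeasure :=
    (finsupp_aemeasurable_and_map _ S hc hne F).1
  ⟨LevyProkhorov.toMeasureEquiv.symm ((Bmeas.meas μ).map hF), by
    classical
    refine ⟨S.image F, le_trans (Finset.card_image_le) hcard, ?_⟩
    have hBm : MeasurableSet (↑(S.image F) : Set W) := (S.image F).finite_toSet.measurableSet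
    have hmap : (((Bmeas.meas μ).map hF).toMeasure) (↑(S.image F) : Set W)
        = (Bmeas.meas μ).toMeasure ((↑S : Set Z) ∩ F ⁻¹' (↑(S.image F) : Set W)) := by
      rw [ProbabilityMeasure.toMeasure_map]
      exact (finsupp_aemeasurable_and_map _ S hc hne F).2 _ hBm
    have hsub : (↑S : Set Z) ∩ F ⁻¹' (↑(S.image F) : Set W) = (↑S : Set Z) := by
      apply Set.inter_eq_left.mpr
      intro z hz
      simp only [Set.mem_preimage, Finset.coe_image, Set.mem_image, Finset.mem_coe] at *
      exact ⟨z, hz, rfl⟩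
    rw [hsub] at hmap
    refine (prob_coeFn_eq_one _).mpr ?_
    show (((Bmeas.meas μ).map hF).toMeasure) (↑(S.image F) : Set W) = 1
    rw [hmap]
    exact (prob_coeFn_eq_one _).mp hS⟩

theorem Bmeas.push_apply (F : Z → W) (μ : Bmeas n Z) (S : Finset Z)
    (hS : Bmeas.meas μ (↑S : Set Z) = 1)
    {B : Set W} (hB : MeasurableSet[borel W] B) :
    letI : MeasurableSpace Z := borel Z
    letI : MeasurableSpace W := borel W
    (Bmeas.meas (Bmeas.push F μ)).toMeasure B
      = (Bmeas.meas μ).toMeasure ((↑S : Set Z) ∩ F ⁻¹' B) := by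
  letI : MeasurableSpace Z := borel Z
  haveI : BorelSpace Z := ⟨rfl⟩
  letI : MeasurableSpace W := borel W
  haveI : BorelSpace W := ⟨rfl⟩
  have hc : (Bmeas.meas μ).toMeasure ((↑S : Set Z)ᶜ) = 0 := Bmeas.compl_zero' hS
  have hne : S.Nonempty := supp_nonempty _ S hc
  have hmeas : (Bmeas.meas (Bmeas.push F μ)).toMeasure = ((Bmeas.meas μ).toMeasure).map F := by
    have : Bmeas.meas (Bmeas.push F μ) = (Bmeas.meas μ).map
        (finsupp_aemeasurable_and_map _ (Bmeas.exists_supp μ).choose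
          (Bmeas.compl_zero' (Bmeas.exists_supp μ).choose_spec.2)
          (supp_nonempty _ _ (Bmeas.compl_zero' (Bmeas.exists_supp μ).choose_spec.2)) F).1 := rfl
    rw [this, ProbabilityMeasure.toMeasure_map]
  rw [hmeas]
  exact (finsupp_aemeasurable_and_map _ S hc hne F).2 B hB

end BmeasAPI

/-! ### Continuity of pushforward -/

open Metric in
theorem continuous_push {n : ℕ} {A Z W : Type*} [MetricSpace A] [MetricSpace Z] [MetricSpace W]
    (E : Set (A × Z)) (F : A × Z → W)
    (hF : Continuous fun e : E => F e)
    (μ : A → Bmeas n Z) (hμ : Continuous μ)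
    (hsupp : ∀ a : A, ∃ S : Finset Z,
      Bmeas.meas (μ a) (↑S : Set Z) = 1 ∧ ∀ z ∈ S, (a, z) ∈ E) :
    Continuous fun a => Bmeas.push (fun z => F (a, z)) (μ a) := by
  classical
  letI : MeasurableSpace Z := borel Z
  haveI : BorelSpace Z := ⟨rfl⟩
  letI : MeasurableSpace W := borel W
  haveI : BorelSpace W := ⟨rfl⟩
  apply continuous_induced_rng.mpr
  have hμ1 : Continuous fun a => (μ a).1 := continuous_subtype_val.comp hμ
  rw [Metric.continuous_iff]
  intro a₀ ε hε
  obtain ⟨S₀, hS₀, hS₀E⟩ := hsupp a₀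
  have h0m : (Bmeas.meas (μ a₀)).toMeasure (↑S₀ : Set Z) = 1 := (prob_coeFn_eq_one _).mp hS₀
  have hc0 : (Bmeas.meas (μ a₀)).toMeasure ((↑S₀ : Set Z)ᶜ) = 0 := Bmeas.compl_zero' hS₀
  have hne0 : S₀.Nonempty := supp_nonempty _ S₀ hc0
  -- choose moduli of continuity at the support points
  have key : ∀ z ∈ S₀, ∃ δ : ℝ, 0 < δ ∧ ∀ p : A × Z, p ∈ E →
      dist p.1 a₀ < δ → dist p.2 z < δ → dist (F p) (F (a₀, z)) < ε / 2 := by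
    intro z hz
    have hzE : ((a₀, z) : A × Z) ∈ E := hS₀E z hz
    have hcont : ContinuousAt (fun e : E => F e) ⟨(a₀, z), hzE⟩ := hF.continuousAt
    rw [Metric.continuousAt_iff] at hcont
    obtain ⟨δ, hδ, hδ'⟩ := hcont (ε / 2) (by linarith)
    refine ⟨δ, hδ, fun p hp h1 h2 => ?_⟩
    have : dist (⟨p, hp⟩ : E) (⟨(a₀, z), hzE⟩ : E) < δ := by
      rw [Subtype.dist_eq, Prod.dist_eq]
      exact max_lt h1 h2
    exact hδ' this
  choose! d hd hd' using key
  set δ₁ : ℝ := S₀.inf' hne0 d with hδ₁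
  have hδ₁pos : 0 < δ₁ := by
    rw [hδ₁, Finset.lt_inf'_iff]
    exact fun z hz => hd z hz
  set δ₂ : ℝ := min (ε / 2) δ₁ with hδ₂
  have hδ₂pos : 0 < δ₂ := lt_min (by linarith) hδ₁pos
  -- continuity of μ in the LP metric
  have hμc : ∃ δ₃ > 0, ∀ a, dist a a₀ < δ₃ → dist ((μ a).1) ((μ a₀).1) < δ₂ / 2 := by
    have := (Metric.continuous_iff.mp hμ1) a₀ (δ₂ / 2) (by linarith)
    exact this
  obtain ⟨δ₃, hδ₃pos, hδ₃⟩ := hμc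
  refine ⟨min δ₂ δ₃, lt_min hδ₂pos hδ₃pos, fun a ha => ?_⟩
  have haδ₂ : dist a a₀ < δ₂ := lt_of_lt_of_le ha (min_le_left _ _)
  have haδ₃ : dist a a₀ < δ₃ := lt_of_lt_of_le ha (min_le_right _ _)
  obtain ⟨Sa, hSa, hSaE⟩ := hsupp a
  -- edist bound between the base measures
  have hedist : levyProkhorovEDist (Bmeas.meas (μ a)).toMeasure (Bmeas.meas (μ a₀)).toMeasure
      < ENNReal.ofReal (δ₂ / 2) := by
    have hd2 : dist ((μ a).1) ((μ a₀).1) < δ₂ / 2 := hδ₃ a haδ₃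
    have hne : levyProkhorovEDist (Bmeas.meas (μ a)).toMeasure (Bmeas.meas (μ a₀)).toMeasure ≠ ⊤ :=
      levyProkhorovEDist_ne_top _ _
    rw [ENNReal.lt_ofReal_iff_toReal_lt hne]
    exact hd2
  -- the main estimate
  have main : dist ((Bmeas.push (fun z => F (a, z)) (μ a)).1)
      ((Bmeas.push (fun z => F (a₀, z)) (μ a₀)).1) ≤ ε / 2 := by
    show levyProkhorovDist (Bmeas.meas (Bmeas.push (fun z => F (a, z)) (μ a))).toMeasure
      (Bmeas.meas (Bmeas.push (fun z => F (a₀, z)) (μ a₀))).toMeasure ≤ ε / 2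
    apply levyProkhorovDist_le_of_forall_le _ _ (by linarith : (0:ℝ) ≤ ε / 2)
    intro ε' B hε' hB
    have hε'pos : 0 < ε' := by linarith
    -- LHS rewrite
    rw [Bmeas.push_apply (fun z => F (a, z)) (μ a) Sa hSa hB]
    set T : Set Z := (↑Sa : Set Z) ∩ (fun z => F (a, z)) ⁻¹' B with hT
    have hTm : MeasurableSet T := (Sa.finite_toSet.inter_of_left _).measurableSet
    have step1 : (Bmeas.meas (μ a)).toMeasure T
        ≤ (Bmeas.meas (μ a₀)).toMeasure (thickening (δ₂ / 2) T) + ENNReal.ofReal (δ₂ / 2) := by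
      have := left_measure_le_of_levyProkhorovEDist_lt hedist (B_mble := hTm)
      rwa [ENNReal.toReal_ofReal (by linarith : (0:ℝ) ≤ δ₂ / 2)] at this
    have step2 : (Bmeas.meas (μ a₀)).toMeasure (thickening (δ₂ / 2) T)
        ≤ (Bmeas.meas (Bmeas.push (fun z => F (a₀, z)) (μ a₀))).toMeasure (thickening ε' B) := by
      rw [Bmeas.push_apply (fun z => F (a₀, z)) (μ a₀) S₀ hS₀
        isOpen_thickening.measurableSet]
      have hsub : thickening (δ₂ / 2) T ∩ (↑S₀ : Set Z)
          ⊆ (↑S₀ : Set Z) ∩ (fun z => F (a₀, z)) ⁻¹' (thickening ε' B) := by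
        rintro z ⟨hzT, hzS₀⟩
        refine ⟨hzS₀, ?_⟩
        rw [mem_thickening_iff] at hzT
        obtain ⟨z', hz'T, hzz'⟩ := hzT
        obtain ⟨hz'Sa, hz'B⟩ := hz'T
        have hz'E : ((a, z') : A × Z) ∈ E := hSaE z' (Finset.mem_coe.mp hz'Sa)
        have hdz : δ₂ ≤ d z := le_trans (min_le_right _ _) (Finset.inf'_le d (Finset.mem_coe.mp hzS₀))
        have hFd : dist (F (a, z')) (F (a₀, z)) < ε / 2 := by
          apply hd' z (Finset.mem_coe.mp hzS₀) (a, z') hz'E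
          · exact lt_of_lt_of_le haδ₂ hdz
          · show dist z' z < d z
            rw [dist_comm]
            calc dist z z' < δ₂ / 2 := hzz'
              _ ≤ δ₂ := by linarith
              _ ≤ d z := hdz
        rw [Set.mem_preimage, mem_thickening_iff]
        exact ⟨F (a, z'), hz'B, by
          rw [dist_comm] at hFd
          calc dist (F (a₀, z)) (F (a, z')) < ε / 2 := hFd
          _ < ε' := by linarith⟩
      calc (Bmeas.meas (μ a₀)).toMeasure (thickening (δ₂ / 2) T)
          = (Bmeas.meas (μ a₀)).toMeasure (thickening (δ₂ / 2) T ∩ (↑S₀ : Set Z)) :=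
            (measure_inter_conull hc0).symm
        _ ≤ _ := measure_mono hsub
    calc (Bmeas.meas (μ a)).toMeasure T
        ≤ (Bmeas.meas (μ a₀)).toMeasure (thickening (δ₂ / 2) T) + ENNReal.ofReal (δ₂ / 2) := step1
      _ ≤ (Bmeas.meas (Bmeas.push (fun z => F (a₀, z)) (μ a₀))).toMeasure (thickening ε' B)
          + ENNReal.ofReal ε' := by
          refine add_le_add step2 (ENNReal.ofReal_le_ofReal ?_)
          have : δ₂ ≤ ε / 2 := min_le_left _ _
          linarith
  exact lt_of_le_of_lt main (by linarith)

/-- The time points `t_j = j/(m-1)`, `j = 0, …, m-1`, in `[0,1]`. -/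
def tpt (m : ℕ) (j : Fin m) : unitInterval :=
  Set.projIcc 0 1 zero_le_one ((j : ℝ) / ((m : ℝ) - 1))

/-! ### The geometric construction -/

section Construction

variable {X Y : Type*} [MetricSpace X] [MetricSpace Y]

/-- The constraint set for navigation transport. -/
def NavSet (m : ℕ) (g : C(Y, X)) : Set ((Fin m → Y) × PathSp X) :=
  {p | ∀ j : Fin m, p.2 (tpt m j) = g (p.1 j)}

def jidx (m : ℕ) (u : ℝ) : ℕ := min (m - 2) ⌊u⌋₊

def uval (m : ℕ) (t : unitInterval) : ℝ := ((m : ℝ) - 1) * (t : ℝ)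

def vval (m : ℕ) (t : unitInterval) : ℝ := uval m t - jidx m (uval m t)

def yval {m : ℕ} (hm : 2 ≤ m) (ys : Fin m → Y) (j : ℕ) : Y :=
  ys ⟨min j (m - 1), by omega⟩

theorem yval_eq {m : ℕ} (hm : 2 ≤ m) (ys : Fin m → Y) {j : ℕ} (hj : j < m) :
    yval hm ys j = ys ⟨j, hj⟩ := by
  unfold yval
  congr 1
  ext
  simp only
  omega

theorem continuous_yval {m : ℕ} (hm : 2 ≤ m) (j : ℕ) :
    Continuous fun ys : Fin m → Y => yval hm ys j := by
  unfold yval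
  exact continuous_apply _

/-- The raw formula for the transported path. -/
def rawG {m : ℕ} (hm : 2 ≤ m) (f : C(X, Y)) (H : C(unitInterval × Y, Y))
    (p : (Fin m → Y) × PathSp X) (t : unitInterval) : Y :=
  if vval m t ≤ 1/3 then
    H (Set.projIcc 0 1 zero_le_one (1 - 3 * vval m t), yval hm p.1 (jidx m (uval m t)))
  else if vval m t ≤ 2/3 then
    f (p.2 (Set.projIcc 0 1 zero_le_one
      (((jidx m (uval m t) : ℝ) + (3 * vval m t - 1)) / ((m : ℝ) - 1))))
  else
    H (Set.projIcc 0 1 zero_le_one (3 * vval m t - 2), yval hm p.1 (jidx m (uval m t) + 1))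

end Construction

section Construction2

variable {X Y : Type*} [MetricSpace X] [MetricSpace Y]

theorem cover_aux {m : ℕ} (hm : 2 ≤ m) (u : ℝ) (hu0 : 0 ≤ u) (hu1 : u ≤ (m : ℝ) - 1) :
    ∃ i : Fin (m - 1) × Fin 3,
      ((i.1 : ℕ) : ℝ) + ((i.2 : ℕ) : ℝ) / 3 ≤ u ∧ u ≤ ((i.1 : ℕ) : ℝ) + (((i.2 : ℕ) : ℝ) + 1) / 3 := by
  have hmR : (2 : ℝ) ≤ (m : ℝ) := by exact_mod_cast hm
  by_cases hk : ⌊3 * u⌋₊ ≤ 3 * (m - 1) - 1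
  · refine ⟨(⟨⌊3 * u⌋₊ / 3, by omega⟩, ⟨⌊3 * u⌋₊ % 3, by omega⟩), ?_, ?_⟩
    · have h1 : ((⌊3 * u⌋₊ : ℕ) : ℝ) ≤ 3 * u := Nat.floor_le (by linarith)
      have h2 : (3 * (⌊3 * u⌋₊ / 3) + ⌊3 * u⌋₊ % 3 : ℕ) = ⌊3 * u⌋₊ := Nat.div_add_mod _ 3
      have h2' : 3 * ((⌊3 * u⌋₊ / 3 : ℕ) : ℝ) + ((⌊3 * u⌋₊ % 3 : ℕ) : ℝ) = ((⌊3 * u⌋₊ : ℕ) : ℝ) := by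
        exact_mod_cast h2
      simp only [Fin.val_mk]
      linarith
    · have h3 : 3 * u < ((⌊3 * u⌋₊ : ℕ) : ℝ) + 1 := Nat.lt_floor_add_one _
      have h2 : (3 * (⌊3 * u⌋₊ / 3) + ⌊3 * u⌋₊ % 3 : ℕ) = ⌊3 * u⌋₊ := Nat.div_add_mod _ 3
      have h2' : 3 * ((⌊3 * u⌋₊ / 3 : ℕ) : ℝ) + ((⌊3 * u⌋₊ % 3 : ℕ) : ℝ) = ((⌊3 * u⌋₊ : ℕ) : ℝ) := by
        exact_mod_cast h2
      simp only [Fin.val_mk]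
      linarith
  · have hk' : 3 * (m - 1) ≤ ⌊3 * u⌋₊ := by omega
    have h1 : ((3 * (m - 1) : ℕ) : ℝ) ≤ 3 * u :=
      (Nat.le_floor_iff (by linarith : (0:ℝ) ≤ 3 * u)).mp hk'
    have h1' : 3 * ((m : ℝ) - 1) ≤ 3 * u := by
      have : ((3 * (m - 1) : ℕ) : ℝ) = 3 * ((m : ℝ) - 1) := by
        push_cast [Nat.cast_sub (by omega : 1 ≤ m)]
        ring
      linarith [this ▸ h1]
    have hu : u = (m : ℝ) - 1 := le_antisymm hu1 (by linarith)
    refine ⟨(⟨m - 2, by omega⟩, ⟨2, by norm_num⟩), ?_, ?_⟩ <;>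
    · simp only [Fin.val_mk]
      have : ((m - 2 : ℕ) : ℝ) = (m : ℝ) - 2 := by
        push_cast [Nat.cast_sub (by omega : 2 ≤ m)]
        ring
      rw [this, hu]
      push_cast
      linarith

theorem continuous_rawG {m : ℕ} (hm : 2 ≤ m) (f : C(X, Y)) (g : C(Y, X))
    (H : C(unitInterval × Y, Y)) (hH0 : ∀ y, H (0, y) = f (g y)) :
    Continuous fun q : ↥(NavSet m g) × unitInterval => rawG hm f H (↑q.1) q.2 := by
  have hmR : (2 : ℝ) ≤ (m : ℝ) := by exact_mod_cast hm
  have hm0 : ((m : ℝ) - 1) ≠ 0 := by linarith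
  -- the closed pieces
  set pc : Fin (m - 1) × Fin 3 → Set (↥(NavSet m g) × unitInterval) := fun i =>
    {q | ((i.1 : ℕ) : ℝ) + ((i.2 : ℕ) : ℝ) / 3 ≤ uval m q.2 ∧
         uval m q.2 ≤ ((i.1 : ℕ) : ℝ) + (((i.2 : ℕ) : ℝ) + 1) / 3} with hpc
  have hucont : Continuous (fun q : ↥(NavSet m g) × unitInterval => uval m q.2) := by
    unfold uval
    exact continuous_const.mul (continuous_subtype_val.comp continuous_snd)
  have hys : Continuous (fun q : ↥(NavSet m g) × unitInterval =>
      ((q.1 : (Fin m → Y) × PathSp X).1)) :=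
    continuous_fst.comp (continuous_subtype_val.comp continuous_fst)
  have hφc : Continuous (fun q : ↥(NavSet m g) × unitInterval =>
      ((q.1 : (Fin m → Y) × PathSp X).2)) :=
    continuous_snd.comp (continuous_subtype_val.comp continuous_fst)
  apply LocallyFinite.continuous (f := pc)
  · exact locallyFinite_of_finite _
  · -- covering
    apply Set.eq_univ_of_forall
    intro q
    have hu0 : 0 ≤ uval m q.2 := mul_nonneg (by linarith) q.2.2.1
    have hu1 : uval m q.2 ≤ (m : ℝ) - 1 := by
      have := q.2.2.2
      calc uval m q.2 ≤ ((m : ℝ) - 1) * 1 := by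
            unfold uval
            apply mul_le_mul_of_nonneg_left this (by linarith)
        _ = (m : ℝ) - 1 := mul_one _
    obtain ⟨i, hi1, hi2⟩ := cover_aux hm (uval m q.2) hu0 hu1
    exact Set.mem_iUnion.mpr ⟨i, hi1, hi2⟩
  · intro i
    have : pc i = (fun q : ↥(NavSet m g) × unitInterval => uval m q.2) ⁻¹'
        (Set.Icc (((i.1 : ℕ) : ℝ) + ((i.2 : ℕ) : ℝ) / 3)
          (((i.1 : ℕ) : ℝ) + (((i.2 : ℕ) : ℝ) + 1) / 3)) := rfl
    rw [this]
    exact IsClosed.preimage hucont isClosed_Icc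
  · rintro ⟨j0, ℓ⟩
    have hj0 : (j0 : ℕ) ≤ m - 2 := by omega
    have hj0m : (j0 : ℕ) < m := by omega
    have hj1m : (j0 : ℕ) + 1 < m := by omega
    fin_cases ℓ
    -- ℓ = 0
    · refine ContinuousOn.congr (f := fun q : ↥(NavSet m g) × unitInterval =>
        H (Set.projIcc 0 1 zero_le_one (1 - 3 * (uval m q.2 - ((j0 : ℕ) : ℝ))),
          yval hm ((q.1 : (Fin m → Y) × PathSp X).1) (j0 : ℕ))) ?_ ?_
      · apply Continuous.continuousOn
        apply H.continuous.comp
        apply Continuous.prodMk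
        · exact continuous_projIcc.comp
            (continuous_const.sub (continuous_const.mul (hucont.sub continuous_const)))
        · exact (continuous_yval hm _).comp hys
      · intro q hq
        simp only [hpc, Set.mem_setOf_eq, Fin.val_mk] at hq
        obtain ⟨h1, h2⟩ := hq
        norm_num at h1 h2
        have hu0 : 0 ≤ uval m q.2 := mul_nonneg (by linarith) q.2.2.1
        have hfl : ⌊uval m q.2⌋₊ = (j0 : ℕ) := by
          rw [Nat.floor_eq_iff hu0]
          exact ⟨h1, by linarith⟩
        have hji : jidx m (uval m q.2) = (j0 : ℕ) := by
          unfold jidx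
          rw [hfl]
          omega
        have hv : vval m q.2 = uval m q.2 - ((j0 : ℕ) : ℝ) := by
          unfold vval
          rw [hji]
        have hvle : vval m q.2 ≤ 1 / 3 := by rw [hv]; linarith
        show rawG hm f H _ _ = _
        beta_reduce
        unfold rawG
        rw [if_pos hvle, hv, hji]
    -- ℓ = 1
    · refine ContinuousOn.congr (f := fun q : ↥(NavSet m g) × unitInterval =>
        f (((q.1 : (Fin m → Y) × PathSp X).2) (Set.projIcc 0 1 zero_le_one
          ((((j0 : ℕ) : ℝ) + (3 * (uval m q.2 - ((j0 : ℕ) : ℝ)) - 1)) / ((m : ℝ) - 1))))) ?_ ?_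
      · apply Continuous.continuousOn
        have hInner : Continuous (fun q : ↥(NavSet m g) × unitInterval =>
            Set.projIcc (0:ℝ) 1 zero_le_one
              ((((j0 : ℕ) : ℝ) + (3 * (uval m q.2 - ((j0 : ℕ) : ℝ)) - 1)) / ((m : ℝ) - 1))) :=
          continuous_projIcc.comp
            ((continuous_const.add ((continuous_const.mul (hucont.sub continuous_const)).sub
              continuous_const)).div_const _)
        exact f.continuous.comp (ContinuousEval.continuous_eval.comp (hφc.prodMk hInner))
      · intro q hq
        simp only [hpc, Set.mem_setOf_eq, Fin.val_mk] at hq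
        obtain ⟨h1, h2⟩ := hq
        norm_num at h1 h2
        have hu0 : 0 ≤ uval m q.2 := mul_nonneg (by linarith) q.2.2.1
        have hfl : ⌊uval m q.2⌋₊ = (j0 : ℕ) := by
          rw [Nat.floor_eq_iff hu0]
          exact ⟨by linarith, by linarith⟩
        have hji : jidx m (uval m q.2) = (j0 : ℕ) := by
          unfold jidx
          rw [hfl]
          omega
        have hv : vval m q.2 = uval m q.2 - ((j0 : ℕ) : ℝ) := by
          unfold vval
          rw [hji]
        by_cases hb : vval m q.2 ≤ 1 / 3
        · -- boundary case: use the constraint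
          have hveq : vval m q.2 = 1 / 3 := le_antisymm hb (by rw [hv]; linarith)
          have hcon := q.1.2 ⟨(j0 : ℕ), hj0m⟩
          show rawG hm f H _ _ = _
          beta_reduce
          unfold rawG
          rw [if_pos hb]
          have harg : 1 - 3 * vval m q.2 = 0 := by rw [hveq]; norm_num
          have harg2 : (((j0 : ℕ) : ℝ) + (3 * (uval m q.2 - ((j0 : ℕ) : ℝ)) - 1)) / ((m : ℝ) - 1)
              = ((j0 : ℕ) : ℝ) / ((m : ℝ) - 1) := by
            rw [← hv, hveq]
            ring_nf
          rw [harg, harg2, hji]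
          have hproj0 : Set.projIcc (0:ℝ) 1 zero_le_one 0 = (0 : unitInterval) := by
            rw [Set.projIcc_left]
            exact Subtype.ext rfl
          rw [hproj0, hH0, yval_eq hm _ hj0m]
          have htpt : Set.projIcc (0:ℝ) 1 zero_le_one (((j0 : ℕ) : ℝ) / ((m : ℝ) - 1))
              = tpt m ⟨(j0 : ℕ), hj0m⟩ := by
            unfold tpt
            norm_num
          rw [htpt, hcon]
        · have hb2 : vval m q.2 ≤ 2 / 3 := by rw [hv]; linarith
          show rawG hm f H _ _ = _
          beta_reduce
          unfold rawG
          rw [if_neg hb, if_pos hb2, hv, hji]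
    -- ℓ = 2
    · refine ContinuousOn.congr (f := fun q : ↥(NavSet m g) × unitInterval =>
        H (Set.projIcc 0 1 zero_le_one (3 * (uval m q.2 - ((j0 : ℕ) : ℝ)) - 2),
          yval hm ((q.1 : (Fin m → Y) × PathSp X).1) ((j0 : ℕ) + 1))) ?_ ?_
      · apply Continuous.continuousOn
        apply H.continuous.comp
        apply Continuous.prodMk
        · exact continuous_projIcc.comp
            ((continuous_const.mul (hucont.sub continuous_const)).sub continuous_const)
        · exact (continuous_yval hm _).comp hys
      · intro q hq
        simp only [hpc, Set.mem_setOf_eq, Fin.val_mk] at hq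
        obtain ⟨h1, h2⟩ := hq
        norm_num at h1 h2
        have hu0 : 0 ≤ uval m q.2 := mul_nonneg (by linarith) q.2.2.1
        by_cases hu1 : uval m q.2 < ((j0 : ℕ) : ℝ) + 1
        · have hfl : ⌊uval m q.2⌋₊ = (j0 : ℕ) := by
            rw [Nat.floor_eq_iff hu0]
            exact ⟨by linarith, by exact_mod_cast hu1⟩
          have hji : jidx m (uval m q.2) = (j0 : ℕ) := by
            unfold jidx
            rw [hfl]
            omega
          have hv : vval m q.2 = uval m q.2 - ((j0 : ℕ) : ℝ) := by
            unfold vval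
            rw [hji]
          have hb1 : ¬ (vval m q.2 ≤ 1 / 3) := by rw [hv]; push_neg; linarith
          by_cases hb : vval m q.2 ≤ 2 / 3
          · -- boundary case: use the constraint
            have hveq : vval m q.2 = 2 / 3 := le_antisymm hb (by rw [hv]; linarith)
            have hcon := q.1.2 ⟨(j0 : ℕ) + 1, hj1m⟩
            show rawG hm f H _ _ = _
            beta_reduce
            unfold rawG
            rw [if_neg hb1, if_pos hb]
            have harg : (((jidx m (uval m q.2) : ℕ) : ℝ) + (3 * vval m q.2 - 1)) / ((m : ℝ) - 1)
                = (((j0 : ℕ) : ℝ) + 1) / ((m : ℝ) - 1) := by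
              rw [hji, hveq]
              ring_nf
            rw [harg]
            have htpt : Set.projIcc (0:ℝ) 1 zero_le_one ((((j0 : ℕ) : ℝ) + 1) / ((m : ℝ) - 1))
                = tpt m ⟨(j0 : ℕ) + 1, hj1m⟩ := by
              unfold tpt
              norm_num
            rw [htpt, hcon]
            have harg2 : 3 * (uval m q.2 - ((j0 : ℕ) : ℝ)) - 2 = 0 := by
              rw [← hv, hveq]
              norm_num
            rw [harg2]
            have hproj0 : Set.projIcc (0:ℝ) 1 zero_le_one 0 = (0 : unitInterval) := by
              rw [Set.projIcc_left]
              exact Subtype.ext rfl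
            rw [hproj0, hH0, yval_eq hm _ hj1m]
          · show rawG hm f H _ _ = _
            unfold rawG
            rw [if_neg hb1, if_neg hb, hv, hji]
        · have huge : ((j0 : ℕ) : ℝ) + 1 ≤ uval m q.2 := not_lt.mp hu1
          have huEq : uval m q.2 = ((j0 : ℕ) : ℝ) + 1 := le_antisymm (by linarith) huge
          have hfl : ⌊uval m q.2⌋₊ = (j0 : ℕ) + 1 := by
            rw [Nat.floor_eq_iff hu0]
            constructor
            · push_cast
              linarith
            · push_cast
              linarith
          by_cases hj2 : (j0 : ℕ) + 1 ≤ m - 2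
          · have hji : jidx m (uval m q.2) = (j0 : ℕ) + 1 := by
              unfold jidx
              rw [hfl]
              omega
            have hv : vval m q.2 = 0 := by
              unfold vval
              rw [hji, huEq]
              push_cast
              ring
            have hb1 : vval m q.2 ≤ 1 / 3 := by rw [hv]; norm_num
            show rawG hm f H _ _ = _
            beta_reduce
            unfold rawG
            rw [if_pos hb1, hv, hji]
            have harg : (1 : ℝ) - 3 * 0 = 1 := by norm_num
            have harg2 : 3 * (uval m q.2 - ((j0 : ℕ) : ℝ)) - 2 = 1 := by
              rw [huEq]
              ring
            rw [harg, harg2]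
          · have hji : jidx m (uval m q.2) = (j0 : ℕ) := by
              unfold jidx
              rw [hfl]
              omega
            have hv : vval m q.2 = 1 := by
              unfold vval
              rw [hji, huEq]
              ring
            have hb1 : ¬ (vval m q.2 ≤ 1 / 3) := by rw [hv]; norm_num
            have hb2 : ¬ (vval m q.2 ≤ 2 / 3) := by rw [hv]; norm_num
            show rawG hm f H _ _ = _
            beta_reduce
            unfold rawG
            rw [if_neg hb1, if_neg hb2, hv, hji]
            have harg : (3 : ℝ) * 1 - 2 = 1 := by norm_num
            have harg2 : 3 * (uval m q.2 - ((j0 : ℕ) : ℝ)) - 2 = 1 := by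
              rw [huEq]
              ring
            rw [harg, harg2]

end Construction2

section Theta

variable {X Y : Type*} [MetricSpace X] [MetricSpace Y]

def theta {m : ℕ} (hm : 2 ≤ m) (f : C(X, Y)) (g : C(Y, X)) (H : C(unitInterval × Y, Y))
    (hH0 : ∀ y, H (0, y) = f (g y)) (e : ↥(NavSet m g)) : PathSp Y :=
  ⟨fun t => rawG hm f H (↑e) t,
   (continuous_rawG hm f g H hH0).comp (Continuous.prodMk continuous_const continuous_id)⟩

theorem continuous_theta {m : ℕ} (hm : 2 ≤ m) (f : C(X, Y)) (g : C(Y, X))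
    (H : C(unitInterval × Y, Y)) (hH0 : ∀ y, H (0, y) = f (g y)) :
    Continuous (theta hm f g H hH0) :=
  ContinuousMap.continuous_of_continuous_uncurry _ (continuous_rawG hm f g H hH0)

theorem theta_tpt {m : ℕ} (hm : 2 ≤ m) (f : C(X, Y)) (g : C(Y, X))
    (H : C(unitInterval × Y, Y)) (hH0 : ∀ y, H (0, y) = f (g y)) (hH1 : ∀ y, H (1, y) = y)
    (e : ↥(NavSet m g)) (j : Fin m) :
    theta hm f g H hH0 e (tpt m j) = (↑e : (Fin m → Y) × PathSp X).1 j := by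
  have hmR : (2 : ℝ) ≤ (m : ℝ) := by exact_mod_cast hm
  have hm0 : ((m : ℝ) - 1) ≠ 0 := by linarith
  have hjm : (j : ℕ) < m := j.2
  have hjle : ((j : ℕ) : ℝ) ≤ (m : ℝ) - 1 := by
    have h1 : (j : ℕ) ≤ m - 1 := by omega
    have h2 : ((j : ℕ) : ℝ) ≤ ((m - 1 : ℕ) : ℝ) := by exact_mod_cast h1
    have h3 : ((m - 1 : ℕ) : ℝ) = (m : ℝ) - 1 := by
      push_cast [Nat.cast_sub (by omega : 1 ≤ m)]
      ring
    linarith [h3 ▸ h2]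
  have hmem : ((j : ℕ) : ℝ) / ((m : ℝ) - 1) ∈ Set.Icc (0:ℝ) 1 := by
    constructor
    · exact div_nonneg (by positivity) (by linarith)
    · rw [div_le_one (by linarith)]
      exact hjle
  have htv : ((tpt m j : unitInterval) : ℝ) = ((j : ℕ) : ℝ) / ((m : ℝ) - 1) := by
    unfold tpt
    rw [Set.projIcc_of_mem zero_le_one hmem]
  have hu : uval m (tpt m j) = ((j : ℕ) : ℝ) := by
    unfold uval
    rw [htv]
    field_simp
  have hproj1 : Set.projIcc (0:ℝ) 1 zero_le_one 1 = (1 : unitInterval) := by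
    rw [Set.projIcc_right]
    exact Subtype.ext rfl
  show rawG hm f H (↑e) (tpt m j) = _
  by_cases hj : (j : ℕ) ≤ m - 2
  · have hfl : ⌊uval m (tpt m j)⌋₊ = (j : ℕ) := by
      rw [hu]
      exact Nat.floor_natCast _
    have hji : jidx m (uval m (tpt m j)) = (j : ℕ) := by
      unfold jidx
      rw [hfl]
      omega
    have hv : vval m (tpt m j) = 0 := by
      unfold vval
      rw [hji, hu, sub_self]
    unfold rawG
    rw [if_pos (by rw [hv]; norm_num : vval m (tpt m j) ≤ 1/3), hv, hji]
    have harg : (1 : ℝ) - 3 * 0 = 1 := by norm_num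
    rw [harg, hproj1, hH1, yval_eq hm _ hjm]
  · have hje : (j : ℕ) = m - 1 := by omega
    have hfl : ⌊uval m (tpt m j)⌋₊ = m - 1 := by
      rw [hu, hje]
      exact Nat.floor_natCast _
    have hji : jidx m (uval m (tpt m j)) = m - 2 := by
      unfold jidx
      rw [hfl]
      omega
    have hv : vval m (tpt m j) = 1 := by
      unfold vval
      rw [hji, hu, hje]
      have h1 : ((m - 1 : ℕ) : ℝ) = (m : ℝ) - 1 := by
        push_cast [Nat.cast_sub (by omega : 1 ≤ m)]
        ring
      have h2 : ((m - 2 : ℕ) : ℝ) = (m : ℝ) - 2 := by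
        push_cast [Nat.cast_sub (by omega : 2 ≤ m)]
        ring
      rw [h1, h2]
      ring
    unfold rawG
    rw [if_neg (by rw [hv]; norm_num), if_neg (by rw [hv]; norm_num), hv, hji]
    have harg : (3 : ℝ) * 1 - 2 = 1 := by norm_num
    rw [harg, hproj1, hH1]
    have hlt : m - 2 + 1 < m := by omega
    rw [yval_eq hm _ hlt]
    have hfe : (⟨m - 2 + 1, hlt⟩ : Fin m) = j := by
      apply Fin.ext
      simp only
      omega
    rw [hfe]

end Theta

/-- A `k`-distributed `m`-navigation algorithm on `X`. -/
def IsNavAlg (m k : ℕ) {X : Type*} [MetricSpace X]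
    (s : (Fin m → X) → Bmeas k (PathSp X)) : Prop :=
  Continuous s ∧ ∀ x : Fin m → X,
    DistributedOn (s x) {φ : PathSp X | ∀ j : Fin m, φ (tpt m j) = x j}

/-- The `m`-th sequential distributional topological complexity. -/
noncomputable def dTC (m : ℕ) (X : Type*) [MetricSpace X] : ℕ∞ :=
  sInf {c : ℕ∞ | ∃ k : ℕ, c = k ∧
    ∃ s : (Fin m → X) → Bmeas (k + 1) (PathSp X), IsNavAlg m (k + 1) s}

/-- A `k`-contraction of `Y` to the point `y₀`. -/
def IsContr (k : ℕ) {Y : Type*} [MetricSpace Y] (y₀ : Y)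
    (H : Y → Bmeas k (PathSp Y)) : Prop :=
  Continuous H ∧ ∀ y : Y,
    DistributedOn (H y) {φ : PathSp Y | φ 0 = y ∧ φ 1 = y₀}

/-- The distributional Lusternik–Schnirelmann category. -/
noncomputable def dcat (Y : Type*) [MetricSpace Y] : ℕ∞ :=
  sInf {c : ℕ∞ | ∃ k : ℕ, c = k ∧
    ∃ (y₀ : Y) (H : Y → Bmeas (k + 1) (PathSp Y)), IsContr (k + 1) y₀ H}

/-- The classical `m`-th sequential topological complexity. -/
noncomputable def TCcl (m : ℕ) (X : Type*) [TopologicalSpace X] : ℕ∞ :=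
  sInf {c : ℕ∞ | ∃ k : ℕ, c = k ∧
    ∃ (U : Fin (k + 1) → Set (Fin m → X)) (s : ∀ i : Fin (k + 1), C(U i, PathSp X)),
      (∀ i, IsOpen (U i)) ∧ (∀ x, ∃ i, x ∈ U i) ∧
      ∀ (i : Fin (k + 1)) (x : U i) (j : Fin m), (s i x) (tpt m j) = (x : Fin m → X) j}

/-! ### Transfer of navigation algorithms along homotopy dominations -/

theorem navalg_transfer {X Y : Type*} [MetricSpace X] [MetricSpace Y] {m k : ℕ} (hm : 2 ≤ m)
    (f : C(X, Y)) (g : C(Y, X)) (H : C(unitInterval × Y, Y))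
    (hH0 : ∀ y, H (0, y) = f (g y)) (hH1 : ∀ y, H (1, y) = y)
    (s : (Fin m → X) → Bmeas k (PathSp X)) (hs : IsNavAlg m k s) :
    ∃ sY : (Fin m → Y) → Bmeas k (PathSp Y), IsNavAlg m k sY := by
  classical
  set FF : ((Fin m → Y) × PathSp X) → PathSp Y := fun p =>
    if h : p ∈ NavSet m g then theta hm f g H hH0 ⟨p, h⟩
    else ContinuousMap.const _ (f (g (p.1 ⟨0, by omega⟩))) with hFF
  have hFFrestr : (fun e : ↥(NavSet m g) => FF ↑e) = theta hm f g H hH0 := by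
    funext e
    simp only [hFF, dif_pos e.2, Subtype.coe_eta]
  set μ : (Fin m → Y) → Bmeas k (PathSp X) := fun ys => s (fun j => g (ys j)) with hμdef
  have hμ : Continuous μ :=
    hs.1.comp (continuous_pi fun j => g.continuous.comp (continuous_apply j))
  have hsupp : ∀ ys : Fin m → Y, ∃ S : Finset (PathSp X),
      Bmeas.meas (μ ys) (↑S : Set (PathSp X)) = 1 ∧ ∀ φ ∈ S, (ys, φ) ∈ NavSet m g := by
    intro ys
    obtain ⟨SD, hsub, hone⟩ := hs.2 (fun j => g (ys j))
    refine ⟨SD, hone, fun φ hφ => ?_⟩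
    exact fun j => hsub (Finset.mem_coe.mpr hφ) j
  refine ⟨fun ys => Bmeas.push (fun φ => FF (ys, φ)) (μ ys), ?_, ?_⟩
  · refine continuous_push (NavSet m g) FF ?_ μ hμ hsupp
    rw [hFFrestr]
    exact continuous_theta hm f g H hH0
  · intro ys
    letI : MeasurableSpace (PathSp X) := borel _
    haveI : BorelSpace (PathSp X) := ⟨rfl⟩
    letI : MeasurableSpace (PathSp Y) := borel _
    haveI : BorelSpace (PathSp Y) := ⟨rfl⟩
    obtain ⟨SB, hcard, hSB⟩ := Bmeas.exists_supp (μ ys)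
    obtain ⟨SD, hsub, hSD⟩ := hs.2 (fun j => g (ys j))
    have h1 : Bmeas.meas (μ ys) (↑(SB ∩ SD) : Set (PathSp X)) = 1 := by
      apply (prob_coeFn_eq_one _).mpr
      rw [Finset.coe_inter]
      rw [measure_inter_conull (Bmeas.compl_zero' hSD)]
      exact (prob_coeFn_eq_one _).mp hSB
    refine ⟨(SB ∩ SD).image (fun φ => FF (ys, φ)), ?_, ?_⟩
    · intro ψ hψ
      simp only [Finset.coe_image, Set.mem_image, Finset.mem_coe, Finset.mem_inter] at hψ
      obtain ⟨φ, ⟨hφB, hφD⟩, rfl⟩ := hψ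
      intro j
      have hmem : (ys, φ) ∈ NavSet m g := fun j' => hsub (Finset.mem_coe.mpr hφD) j'
      show FF (ys, φ) (tpt m j) = ys j
      rw [hFF]
      simp only [dif_pos hmem]
      exact theta_tpt hm f g H hH0 hH1 ⟨(ys, φ), hmem⟩ j
    · apply (prob_coeFn_eq_one _).mpr
      have hB : MeasurableSet[borel (PathSp Y)]
          (↑((SB ∩ SD).image (fun φ => FF (ys, φ))) : Set (PathSp Y)) :=
        ((SB ∩ SD).image _).finite_toSet.measurableSet
      rw [Bmeas.push_apply (fun φ => FF (ys, φ)) (μ ys) (SB ∩ SD) h1 hB]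
      have hsub2 : (↑(SB ∩ SD) : Set (PathSp X)) ∩
          (fun φ => FF (ys, φ)) ⁻¹' (↑((SB ∩ SD).image (fun φ => FF (ys, φ))) : Set (PathSp Y))
          = (↑(SB ∩ SD) : Set (PathSp X)) := by
        apply Set.inter_eq_left.mpr
        intro φ hφ
        simp only [Set.mem_preimage, Finset.coe_image, Set.mem_image, Finset.mem_coe]
        exact ⟨φ, Finset.mem_coe.mp hφ, rfl⟩
      rw [hsub2]
      exact (prob_coeFn_eq_one _).mp h1

theorem dTC_le_of_domination (m : ℕ) (hm : 2 ≤ m) {X Y : Type*} [MetricSpace X] [MetricSpace Y]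
    (f : C(X, Y)) (g : C(Y, X)) (hfg : (f.comp g).Homotopic (ContinuousMap.id Y)) :
    dTC m Y ≤ dTC m X := by
  obtain ⟨Hht⟩ := hfg
  set H : C(unitInterval × Y, Y) := Hht.toContinuousMap with hH
  have hH0 : ∀ y, H (0, y) = f (g y) := fun y => by
    simp only [hH, ContinuousMap.Homotopy.coe_toContinuousMap]
    exact Hht.apply_zero y
  have hH1 : ∀ y, H (1, y) = y := fun y => by
    simp only [hH, ContinuousMap.Homotopy.coe_toContinuousMap]
    exact Hht.apply_one y
  unfold dTC
  apply sInf_le_sInf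
  rintro c ⟨k, rfl, sX, hsX⟩
  obtain ⟨sY, hsY⟩ := navalg_transfer hm f g H hH0 hH1 sX hsX
  exact ⟨k, rfl, sY, hsY⟩

/-- `dTC_m` is a homotopy invariant: if `f : X → Y` is a homotopy domination (with right
homotopy inverse `g`), then `dTC_m(Y) ≤ dTC_m(X)`; if moreover `g` is a two-sided homotopy
inverse (so `X ≃ Y` in the homotopy category), then `dTC_m(X) = dTC_m(Y)`. -/
theorem dTC_homotopy_invariant (m : ℕ) (hm : 2 ≤ m) (X Y : Type) [MetricSpace X] [MetricSpace Y]
    [PathConnectedSpace X] [PathConnectedSpace Y] (f : C(X, Y)) (g : C(Y, X))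
    (hfg : (f.comp g).Homotopic (ContinuousMap.id Y)) :
    dTC m Y ≤ dTC m X ∧
      ((g.comp f).Homotopic (ContinuousMap.id X) → dTC m X = dTC m Y) := by
  refine ⟨dTC_le_of_domination m hm f g hfg, fun hgf => ?_⟩
  exact le_antisymm (dTC_le_of_domination m hm g f hgf) (dTC_le_of_domination m hm f g hfg)
end
end

section
/- For every m ≥ 2 and every path-connected metric space X, dTC_m(X) ≤ TC_m(X), where TC_m is the classical m-th sequential topological complexity. -/
open MeasureTheory unitInterval Metric Set
open scoped ENNReal NNReal

noncomputable section

section AuxLP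

variable {Z : Type*} [MetricSpace Z] [MeasurableSpace Z] [OpensMeasurableSpace Z]

lemma mixM_apply {n : ℕ} (w : Fin n → ℝ≥0∞) (p : Fin n → Z) {B : Set Z}
    (hB : MeasurableSet B) [DecidablePred fun i : Fin n => p i ∈ B] :
    (∑ i, w i • Measure.dirac (p i)) B
      = ∑ i ∈ Finset.univ.filter (fun i => p i ∈ B), w i := by
  rw [Measure.finset_sum_apply, Finset.sum_filter]
  refine Finset.sum_congr rfl fun i _ => ?_
  rw [Measure.smul_apply, Measure.dirac_apply' _ hB, Set.indicator_apply]
  by_cases h : p i ∈ B <;> simp [h]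

lemma mixM_le {n : ℕ} (w w' : Fin n → ℝ≥0∞) (p p' : Fin n → Z) {δ : ℝ} {ε : ℝ≥0∞}
    (hδε : δ < ε.toReal)
    (hsum : ∑ i, (w i - w' i) ≤ ε)
    (hp : ∀ i, dist (p i) (p' i) < δ ∨ w' i = 0)
    {B : Set Z} (hB : MeasurableSet B) :
    (∑ i, w i • Measure.dirac (p i)) B
      ≤ (∑ i, w' i • Measure.dirac (p' i)) (thickening ε.toReal B) + ε := by
  classical
  rw [mixM_apply w p hB, mixM_apply w' p' isOpen_thickening.measurableSet]
  calc ∑ i ∈ Finset.univ.filter (fun i => p i ∈ B), w i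
      ≤ ∑ i ∈ Finset.univ.filter (fun i => p i ∈ B), (w' i + (w i - w' i)) :=
        Finset.sum_le_sum fun i _ => le_add_tsub
    _ = (∑ i ∈ Finset.univ.filter (fun i => p i ∈ B), w' i)
        + ∑ i ∈ Finset.univ.filter (fun i => p i ∈ B), (w i - w' i) :=
        Finset.sum_add_distrib
    _ ≤ (∑ i ∈ Finset.univ.filter (fun i => p' i ∈ thickening ε.toReal B), w' i) + ε := by
        refine add_le_add ?_ ?_
        · refine Finset.sum_le_sum_of_ne_zero fun i hi hne => ?_
          simp only [Finset.mem_filter, Finset.mem_univ, true_and] at hi ⊢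
          rcases hp i with h | h
          · exact Metric.mem_thickening_iff.2 ⟨p i, hi, lt_trans (by rwa [dist_comm]) hδε⟩
          · exact absurd h hne
        · exact le_trans (Finset.sum_le_sum_of_subset (Finset.filter_subset _ _)) hsum

lemma mixM_LP {n : ℕ} (w w' : Fin n → ℝ≥0∞) (p p' : Fin n → Z) {δ : ℝ} (hδ : 0 < δ)
    (hsum : ∑ i, (w i - w' i) ≤ ENNReal.ofReal δ)
    (hsum' : ∑ i, (w' i - w i) ≤ ENNReal.ofReal δ)
    (hp : ∀ i, dist (p i) (p' i) < δ ∨ (w i = 0 ∧ w' i = 0)) :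
    levyProkhorovEDist (∑ i, w i • Measure.dirac (p i)) (∑ i, w' i • Measure.dirac (p' i))
      ≤ ENNReal.ofReal δ := by
  apply levyProkhorovEDist_le_of_forall
  intro ε B hlt hεtop hB
  have hδε : δ < ε.toReal := (ENNReal.ofReal_lt_iff_lt_toReal hδ.le hεtop.ne).1 hlt
  constructor
  · refine mixM_le w w' p p' hδε (hsum.trans hlt.le) (fun i => ?_) hB
    rcases hp i with h | h
    · exact Or.inl h
    · exact Or.inr h.2
  · refine mixM_le w' w p' p hδε (hsum'.trans hlt.le) (fun i => ?_) hB
    rcases hp i with h | h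
    · exact Or.inl (by rwa [dist_comm])
    · exact Or.inr h.1

end AuxLP


/-- For every `m ≥ 2` and every path-connected metric space `X`, `dTC_m(X) ≤ TC_m(X)`. -/
theorem dTC_le_TC (m : ℕ) (hm : 2 ≤ m) (X : Type) [MetricSpace X] [PathConnectedSpace X] :
    dTC m X ≤ TCcl m X := by
  classical
  apply sInf_le_sInf
  rintro c ⟨k, rfl, U, sec, hUo, hUc, hsec⟩
  refine ⟨k, rfl, ?_⟩
  letI : MeasurableSpace (PathSp X) := borel (PathSp X)
  haveI : BorelSpace (PathSp X) := ⟨rfl⟩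
  obtain ⟨f, hf⟩ := PartitionOfUnity.exists_isSubordinate (s := (Set.univ : Set (Fin m → X)))
    isClosed_univ U hUo (fun x _ => Set.mem_iUnion.2 (hUc x))
  have triv : True := trivial
  have hX : Nonempty X := inferInstance
  let φ₀ : PathSp X := ContinuousMap.const _ (Classical.arbitrary X)
  let p : Fin (k+1) → (Fin m → X) → PathSp X := fun i x => if h : x ∈ U i then sec i ⟨x, h⟩ else φ₀
  let w : Fin (k+1) → (Fin m → X) → ℝ≥0∞ := fun i x => ENNReal.ofReal (f i x)
  have hw1 : ∀ x, ∑ i, w i x = 1 := by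
    intro x
    rw [← ENNReal.ofReal_sum_of_nonneg (fun i _ => f.nonneg i x)]
    have h1 := f.sum_eq_one (Set.mem_univ x)
    rw [finsum_eq_sum_of_fintype] at h1
    rw [h1, ENNReal.ofReal_one]
  have hwzero : ∀ i x, f i x = 0 → w i x = 0 := by
    intro i x h; simp [w, h]
  let meas : (Fin m → X) → Measure (PathSp X) := fun x => ∑ i, w i x • Measure.dirac (p i x)
  have hprob : ∀ x, IsProbabilityMeasure (meas x) := by
    intro x
    constructor
    rw [show meas x Set.univ = _ from mixM_apply _ _ MeasurableSet.univ]
    simpa using hw1 x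
  have hsupp : ∀ i x, f i x ≠ 0 → x ∈ U i := fun i x h =>
    hf i (subset_tsupport _ h)
  have hpval : ∀ i x (h : x ∈ U i), p i x = sec i ⟨x, h⟩ := fun i x h => dif_pos h
  -- the support finset
  have key : ∀ x, ∃ S : Finset (PathSp X), S.card ≤ k+1 ∧
      (↑S : Set (PathSp X)) ⊆ {φ : PathSp X | ∀ j : Fin m, φ (tpt m j) = x j} ∧
      meas x (↑S : Set (PathSp X)) = 1 := by
    intro x
    refine ⟨Finset.image (fun i => p i x) (Finset.univ.filter fun i => f i x ≠ 0), ?_, ?_, ?_⟩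
    · exact Finset.card_image_le.trans ((Finset.card_filter_le _ _).trans (by simp))
    · intro φ hφ
      simp only [Finset.coe_image, Set.mem_image, Finset.mem_coe, Finset.mem_filter,
        Finset.mem_univ, true_and] at hφ
      obtain ⟨i, hi, rfl⟩ := hφ
      have hx : x ∈ U i := hsupp i x hi
      intro j
      rw [hpval i x hx]
      exact hsec i ⟨x, hx⟩ j
    · set S := Finset.image (fun i => p i x) (Finset.univ.filter fun i => f i x ≠ 0) with hS
      have hMS : MeasurableSet (↑S : Set (PathSp X)) := S.finite_toSet.measurableSet
      rw [show meas x (↑S : Set (PathSp X)) = _ from mixM_apply _ _ hMS]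
      apply le_antisymm
      · calc ∑ i ∈ Finset.univ.filter (fun i => p i x ∈ (↑S : Set (PathSp X))), w i x
            ≤ ∑ i, w i x := Finset.sum_le_sum_of_subset (Finset.filter_subset _ _)
          _ = 1 := hw1 x
      · rw [← hw1 x]
        refine Finset.sum_le_sum_of_ne_zero fun i _ hne => ?_
        have hfi : f i x ≠ 0 := fun h => hne (hwzero i x h)
        simp only [Finset.mem_filter, Finset.mem_univ, true_and, Finset.mem_coe]
        exact Finset.mem_image.2 ⟨i, Finset.mem_filter.2 ⟨Finset.mem_univ i, hfi⟩, rfl⟩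
  let probm : (Fin m → X) → @ProbabilityMeasure (PathSp X) (borel _) := fun x => ⟨meas x, hprob x⟩
  have hcoe : ∀ x (S : Finset (PathSp X)), meas x (↑S : Set (PathSp X)) = 1 →
      (probm x) (↑S : Set (PathSp X)) = 1 := by
    intro x S h
    have h2 : ((probm x) (↑S : Set (PathSp X)) : ℝ≥0∞) = 1 := by
      rw [ProbabilityMeasure.ennreal_coeFn_eq_coeFn_toMeasure]
      exact h
    exact_mod_cast h2
  have smem : ∀ x, ∃ S : Finset (PathSp X), S.card ≤ k+1 ∧
      (LevyProkhorov.toMeasureEquiv ((LevyProkhorov.toMeasureEquiv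
        (α := @ProbabilityMeasure (PathSp X) (borel _))).symm (probm x))
        : @ProbabilityMeasure (PathSp X) (borel _)) (↑S : Set (PathSp X)) = 1 := by
    intro x
    obtain ⟨S, hcard, _, hmeas⟩ := key x
    exact ⟨S, hcard, by simpa using hcoe x S hmeas⟩
  let sfun : (Fin m → X) → Bmeas (k+1) (PathSp X) := fun x =>
    ⟨(LevyProkhorov.toMeasureEquiv).symm (probm x), smem x⟩
  refine ⟨sfun, ?_, ?_⟩
  · -- continuity
    apply Continuous.subtype_mk
    rw [continuous_iff_continuousAt]
    intro x₀
    apply Metric.tendsto_nhds.mpr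
    intro ε hε
    set δ := ε / 2 with hδdef
    have hδ : 0 < δ := by positivity
    -- eventually facts
    have F1 : ∀ᶠ x in nhds x₀, ∀ i, x₀ ∉ U i → f i x = 0 := by
      rw [Filter.eventually_all]
      intro i
      by_cases h : x₀ ∈ U i
      · exact Filter.Eventually.of_forall fun x h' => absurd h h'
      · have hnt : x₀ ∉ tsupport (f i) := fun hx => h (hf i hx)
        filter_upwards [(isClosed_tsupport (f i)).isOpen_compl.mem_nhds hnt] with x hx
        exact fun _ => image_eq_zero_of_notMem_tsupport hx
    have F2 : ∀ᶠ x in nhds x₀, ∑ i, |f i x - f i x₀| < δ := by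
      have hc : Continuous fun x => ∑ i, |f i x - f i x₀| :=
        continuous_finset_sum _ fun i _ => ((f i).continuous.sub continuous_const).abs
      have h0 : Filter.Tendsto (fun x => ∑ i, |f i x - f i x₀|) (nhds x₀) (nhds 0) := by
        have := hc.tendsto x₀
        simpa using this
      exact h0.eventually_lt_const hδ
    have F3 : ∀ᶠ x in nhds x₀, ∀ i, x₀ ∈ U i → dist (p i x) (p i x₀) < δ := by
      rw [Filter.eventually_all]
      intro i
      by_cases h : x₀ ∈ U i
      · have hco : ContinuousOn (p i) (U i) := by
          rw [continuousOn_iff_continuous_restrict]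
          have heq : (U i).domRestrict (p i) = fun y : U i => sec i y :=
            funext fun y => dif_pos y.2
          rw [heq]
          exact (sec i).continuous
        have hca : ContinuousAt (p i) x₀ := hco.continuousAt ((hUo i).mem_nhds h)
        have := Metric.tendsto_nhds.mp hca δ hδ
        filter_upwards [this] with x hx
        exact fun _ => hx
      · exact Filter.Eventually.of_forall fun x h' => absurd h' h
    filter_upwards [F1, F2, F3] with x h1 h2 h3
    have hf0 : ∀ i, x₀ ∉ U i → f i x₀ = 0 := fun i h =>
      image_eq_zero_of_notMem_tsupport (fun hx => h (hf i hx))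
    have hsum : ∑ i, (w i x - w i x₀) ≤ ENNReal.ofReal δ := by
      calc ∑ i, (w i x - w i x₀)
          = ∑ i, ENNReal.ofReal (f i x - f i x₀) := by
            refine Finset.sum_congr rfl fun i _ => ?_
            rw [ENNReal.ofReal_sub _ (f.nonneg i x₀)]
        _ ≤ ∑ i, ENNReal.ofReal |f i x - f i x₀| :=
            Finset.sum_le_sum fun i _ => ENNReal.ofReal_le_ofReal (le_abs_self _)
        _ = ENNReal.ofReal (∑ i, |f i x - f i x₀|) :=
            (ENNReal.ofReal_sum_of_nonneg fun i _ => abs_nonneg _).symm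
        _ ≤ ENNReal.ofReal δ := ENNReal.ofReal_le_ofReal h2.le
    have hsum' : ∑ i, (w i x₀ - w i x) ≤ ENNReal.ofReal δ := by
      calc ∑ i, (w i x₀ - w i x)
          = ∑ i, ENNReal.ofReal (f i x₀ - f i x) := by
            refine Finset.sum_congr rfl fun i _ => ?_
            rw [ENNReal.ofReal_sub _ (f.nonneg i x)]
        _ ≤ ∑ i, ENNReal.ofReal |f i x - f i x₀| :=
            Finset.sum_le_sum fun i _ =>
              ENNReal.ofReal_le_ofReal ((le_abs_self _).trans (abs_sub_comm _ _).le)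
        _ = ENNReal.ofReal (∑ i, |f i x - f i x₀|) :=
            (ENNReal.ofReal_sum_of_nonneg fun i _ => abs_nonneg _).symm
        _ ≤ ENNReal.ofReal δ := ENNReal.ofReal_le_ofReal h2.le
    have hp : ∀ i, dist (p i x) (p i x₀) < δ ∨ (w i x = 0 ∧ w i x₀ = 0) := by
      intro i
      by_cases h : x₀ ∈ U i
      · exact Or.inl (h3 i h)
      · exact Or.inr ⟨hwzero i x (h1 i h), hwzero i x₀ (hf0 i h)⟩
    have hedist : levyProkhorovEDist (meas x) (meas x₀) ≤ ENNReal.ofReal δ :=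
      mixM_LP _ _ _ _ hδ hsum hsum' hp
    calc dist ((LevyProkhorov.toMeasureEquiv).symm (probm x)) ((LevyProkhorov.toMeasureEquiv).symm (probm x₀))
        = (levyProkhorovEDist (meas x) (meas x₀)).toReal := rfl
      _ ≤ δ := ENNReal.toReal_le_of_le_ofReal hδ.le hedist
      _ < ε := by rw [hδdef]; linarith
  · -- distributed on
    intro x
    obtain ⟨S, _, hsub, hmeas⟩ := key x
    exact ⟨S, hsub, hcoe x S hmeas⟩
end
end

section
/- For every m ≥ 2 and path-connected metric space X, dTC_m(X) ≤ dcat(X^m). -/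
open MeasureTheory unitInterval

noncomputable section

namespace DTCaux

open scoped Classical ENNReal NNReal


lemma clamp_of_ge {x : ℝ} (h : 1 ≤ x) : Set.projIcc (0:ℝ) 1 zero_le_one x = 1 := by
  rw [Set.projIcc_of_right_le zero_le_one h]; rfl

lemma clamp_of_le {x : ℝ} (h : x ≤ 0) : Set.projIcc (0:ℝ) 1 zero_le_one x = 0 := by
  rw [Set.projIcc_of_le_left zero_le_one h]; rfl

variable {X : Type*} [MetricSpace X]

/-- Concatenation of the paths `p 0, …, p (n-1)` as a map `ℝ → X`, where `p j` is traversed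
on the time interval `[j, j+1]`. -/
noncomputable def chainMap (a : ℕ → X) (p : ∀ j : ℕ, Path (a j) (a (j+1))) : ℕ → ℝ → X
  | 0, _ => a 0
  | (n+1), t => if t ≤ (n : ℝ) then chainMap a p n t
      else p n (Set.projIcc 0 1 zero_le_one (t - n))

lemma chainMap_of_ge (a : ℕ → X) (p : ∀ j : ℕ, Path (a j) (a (j+1))) :
    ∀ (n : ℕ) (t : ℝ), (n : ℝ) ≤ t → chainMap a p n t = a n
  | 0, t, _ => rfl
  | (n+1), t, ht => by
    have h1 : (n : ℝ) + 1 ≤ t := by push_cast at ht; linarith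
    have h2 : (1:ℝ) ≤ t - n := by linarith
    rw [chainMap, if_neg (by linarith), clamp_of_ge h2, Path.target]

lemma chainMap_nat (a : ℕ → X) (p : ∀ j : ℕ, Path (a j) (a (j+1))) :
    ∀ (n j : ℕ), j ≤ n → chainMap a p n (j : ℝ) = a j
  | 0, j, hj => by
    interval_cases j
    rfl
  | (n+1), j, hj => by
    rcases Nat.lt_or_ge j (n+1) with h | h
    · have hj' : j ≤ n := by omega
      rw [chainMap, if_pos (by exact_mod_cast hj')]
      exact chainMap_nat a p n j hj'
    · have hj' : j = n + 1 := by omega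
      subst hj'
      have h2 : (1:ℝ) ≤ ((n+1:ℕ):ℝ) - n := by push_cast; linarith
      rw [chainMap, if_neg (by push_cast; linarith), clamp_of_ge h2, Path.target]

lemma chainMap_continuous (a : ℕ → X) (p : ∀ j : ℕ, Path (a j) (a (j+1))) :
    ∀ n : ℕ, Continuous (chainMap a p n)
  | 0 => continuous_const
  | (n+1) => by
    show Continuous fun t : ℝ => if t ≤ (n : ℝ) then chainMap a p n t
      else p n (Set.projIcc 0 1 zero_le_one (t - n))
    have hg : Continuous fun t : ℝ => (p n) (Set.projIcc 0 1 zero_le_one (t - (n:ℝ))) :=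
      (p n).continuous.comp (continuous_projIcc.comp (continuous_sub_right (n:ℝ)))
    apply Continuous.if_le (chainMap_continuous a p n) hg continuous_id continuous_const
    intro t ht
    subst ht
    rw [chainMap_of_ge a p n _ le_rfl, sub_self, clamp_of_le le_rfl, Path.source]

lemma chainMap_dist (a a' : ℕ → X) (p : ∀ j : ℕ, Path (a j) (a (j+1)))
    (p' : ∀ j : ℕ, Path (a' j) (a' (j+1))) {d : ℝ}
    (h : ∀ (j : ℕ) (t : unitInterval), dist (p j t) (p' j t) ≤ d) :
    ∀ (n : ℕ) (t : ℝ), dist (chainMap a p n t) (chainMap a' p' n t) ≤ d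
  | 0, t => by
    have := h 0 0
    rwa [Path.source, Path.source] at this
  | (n+1), t => by
    rw [chainMap, chainMap]
    split_ifs
    · exact chainMap_dist a a' p p' h n t
    · exact h n _


section Nav

variable {X : Type*} [MetricSpace X] [PathConnectedSpace X]

/-- Clamped index function. -/
def fc (m : ℕ) (hm : 2 ≤ m) (n : ℕ) : Fin m := ⟨min n (m-1), by omega⟩

/-- The `i`-th coordinate path of a path `φ` in `X^m`. -/
def coordPath {m : ℕ} (φ : C(unitInterval, Fin m → X)) (i : Fin m) :
    Path (φ 0 i) (φ 1 i) :=
  ⟨⟨fun t => φ t i, (continuous_apply i).comp φ.continuous⟩, rfl, rfl⟩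

variable (m : ℕ) (hm : 2 ≤ m) (y₀ : Fin m → X)

/-- The `j`-th piece: from `φ(0)_j` to `y₀_j` along coordinate `j` of `φ`, then a fixed path
from `y₀_j` to `y₀_{j+1}`, then backwards along coordinate `j+1` of `φ`. -/
def piece (φ : C(unitInterval, Fin m → X)) (hφ : φ 1 = y₀) (j : ℕ) :
    Path (φ 0 (fc m hm j)) (φ 0 (fc m hm (j+1))) :=
  ((coordPath φ (fc m hm j)).cast rfl (by rw [hφ])).trans
    (((PathConnectedSpace.somePath (y₀ (fc m hm j)) (y₀ (fc m hm (j+1)))).trans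
      (((coordPath φ (fc m hm (j+1))).cast rfl (by rw [hφ])).symm)))

/-- The navigation map `C(I, X^m) → C(I, X)`. -/
def navMap : C(unitInterval, Fin m → X) → C(unitInterval, X) := fun φ =>
  if hφ : φ 1 = y₀ then
    ⟨fun t => chainMap (fun n => φ 0 (fc m hm n)) (piece m hm y₀ φ hφ) (m-1) (((m-1 : ℕ) : ℝ) * t),
     (chainMap_continuous _ _ _).comp (continuous_const.mul continuous_subtype_val)⟩
  else ContinuousMap.const _ (y₀ ⟨0, by omega⟩)

lemma navMap_tpt (φ : C(unitInterval, Fin m → X)) (hφ : φ 1 = y₀) (j : Fin m) :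
    navMap m hm y₀ φ (tpt m j) = φ 0 j := by
  rw [navMap, dif_pos hφ]
  show chainMap _ _ (m-1) _ = _
  have hm1 : ((m-1:ℕ) : ℝ) = (m : ℝ) - 1 := by
    have : (1:ℕ) ≤ m := by omega
    push_cast [Nat.cast_sub this]
    ring
  have hmne : (m : ℝ) - 1 ≠ 0 := by
    have : (2:ℝ) ≤ (m:ℝ) := by exact_mod_cast hm
    linarith
  have h0 : (0:ℝ) < (m:ℝ) - 1 := by
    have : (2:ℝ) ≤ (m:ℝ) := by exact_mod_cast hm
    linarith
  have hjle : (j : ℝ) ≤ (m:ℝ) - 1 := by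
    rw [← hm1]
    exact_mod_cast Nat.le_sub_one_of_lt j.isLt
  have hjm : (j : ℝ) / ((m:ℝ) - 1) ∈ Set.Icc (0:ℝ) 1 := by
    constructor
    · exact div_nonneg (by positivity) h0.le
    · rw [div_le_one h0]
      exact hjle
  have htpt : ((tpt m j : unitInterval) : ℝ) = (j : ℝ) / ((m:ℝ) - 1) := by
    rw [tpt, Set.projIcc_of_mem _ hjm]
  have hmul : ((m-1:ℕ) : ℝ) * ((tpt m j : unitInterval) : ℝ) = ((j : ℕ) : ℝ) := by
    rw [htpt, hm1]
    field_simp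
  rw [hmul, chainMap_nat _ _ _ (j : ℕ) (by omega)]
  have hfc : fc m hm (j : ℕ) = j := by
    apply Fin.ext
    simp only [fc]
    omega
  rw [hfc]

lemma navMap_dist (φ ψ : C(unitInterval, Fin m → X)) (hφ : φ 1 = y₀) (hψ : ψ 1 = y₀) :
    dist (navMap m hm y₀ φ) (navMap m hm y₀ ψ) ≤ dist φ ψ := by
  simp only [navMap, dif_pos hφ, dif_pos hψ]
  rw [ContinuousMap.dist_le dist_nonneg]
  intro t
  apply chainMap_dist
  intro j u
  have hcoord : ∀ (i : Fin m) (v : unitInterval), dist (φ v i) (ψ v i) ≤ dist φ ψ :=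
    fun i v => (dist_le_pi_dist (φ v) (ψ v) i).trans (ContinuousMap.dist_apply_le_dist v)
  rw [piece, piece]
  rw [Path.trans_apply, Path.trans_apply]
  split_ifs with h1
  · simpa [Path.cast, coordPath] using hcoord _ _
  · rw [Path.trans_apply, Path.trans_apply]
    split_ifs with h2
    · simp [dist_nonneg]
    · simp only [Path.symm_apply]
      simpa [Path.cast, coordPath] using hcoord _ _

end Nav

section LP

variable {Z W : Type*} [MetricSpace Z] [MetricSpace W]
  [MeasurableSpace Z] [BorelSpace Z] [MeasurableSpace W] [BorelSpace W]

lemma aemeasurable_of_null_compl_finset [Nonempty W] (g : Z → W) (μ : Measure Z) (S : Finset Z)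
    (h : μ ((↑S : Set Z)ᶜ) = 0) : AEMeasurable g μ := by
  refine ⟨(↑S : Set Z).piecewise g (fun _ => Classical.arbitrary W), ?_, ?_⟩
  · intro B hB
    rw [Set.piecewise_preimage]
    apply MeasurableSet.union
    · exact (S.finite_toSet.subset (Set.inter_subset_right)).measurableSet
    · exact (measurable_const hB).diff S.finite_toSet.measurableSet
  · rw [Filter.EventuallyEq, ae_iff]
    apply measure_mono_null _ h
    intro z hz
    simp only [Set.mem_setOf_eq] at hz
    intro hzS
    exact hz (Set.piecewise_eq_of_mem _ _ _ hzS).symm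

lemma lp_side (g : Z → W) (E : Set Z)
    (hg : ∀ z ∈ E, ∀ z' ∈ E, dist (g z) (g z') ≤ dist z z')
    (μ ν : Measure Z) (hgμ : AEMeasurable g μ) (hgν : AEMeasurable g ν)
    (S T : Finset Z) (hSE : (↑S : Set Z) ⊆ E) (hTE : (↑T : Set Z) ⊆ E)
    (hS : μ ((↑S : Set Z)ᶜ) = 0) (hT : ν ((↑T : Set Z)ᶜ) = 0)
    (ε : ℝ≥0∞) (h : ∀ B, MeasurableSet B → μ B ≤ ν (Metric.thickening ε.toReal B) + ε)
    {B : Set W} (hB : MeasurableSet B) :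
    μ.map g B ≤ ν.map g (Metric.thickening ε.toReal B) + ε := by
  rw [Measure.map_apply_of_aemeasurable hgμ hB,
      Measure.map_apply_of_aemeasurable hgν Metric.isOpen_thickening.measurableSet]
  set r := ε.toReal with hr
  have hAm : MeasurableSet (g ⁻¹' B ∩ ↑S) :=
    (S.finite_toSet.subset (Set.inter_subset_right)).measurableSet
  have step1 : μ (g ⁻¹' B) ≤ μ (g ⁻¹' B ∩ ↑S) := by
    calc μ (g ⁻¹' B) ≤ μ (g ⁻¹' B ∩ ↑S) + μ (g ⁻¹' B \ ↑S) :=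
          measure_le_inter_add_diff μ _ _
    _ ≤ μ (g ⁻¹' B ∩ ↑S) + μ ((↑S : Set Z)ᶜ) := by
          gcongr
          exact fun z hz => hz.2
    _ = μ (g ⁻¹' B ∩ ↑S) := by rw [hS, add_zero]
  have incl : Metric.thickening r (g ⁻¹' B ∩ ↑S) ∩ ↑T ⊆ g ⁻¹' (Metric.thickening r B) := by
    rintro z ⟨hzth, hzT⟩
    obtain ⟨z', hz'A, hd⟩ := Metric.mem_thickening_iff.1 hzth
    exact Metric.mem_thickening_iff.2
      ⟨g z', hz'A.1, lt_of_le_of_lt (hg z (hTE hzT) z' (hSE hz'A.2)) hd⟩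
  have step2 : ν (Metric.thickening r (g ⁻¹' B ∩ ↑S)) ≤ ν (g ⁻¹' (Metric.thickening r B)) := by
    calc ν (Metric.thickening r (g ⁻¹' B ∩ ↑S))
        ≤ ν (Metric.thickening r (g ⁻¹' B ∩ ↑S) ∩ ↑T)
          + ν (Metric.thickening r (g ⁻¹' B ∩ ↑S) \ ↑T) := measure_le_inter_add_diff ν _ _
    _ ≤ ν (g ⁻¹' (Metric.thickening r B)) + ν ((↑T : Set Z)ᶜ) :=
          add_le_add (measure_mono incl) (measure_mono (fun z hz => hz.2))
    _ = ν (g ⁻¹' (Metric.thickening r B)) := by rw [hT, add_zero]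
  calc μ (g ⁻¹' B) ≤ μ (g ⁻¹' B ∩ ↑S) := step1
  _ ≤ ν (Metric.thickening r (g ⁻¹' B ∩ ↑S)) + ε := h _ hAm
  _ ≤ ν (g ⁻¹' (Metric.thickening r B)) + ε := by gcongr

lemma lp_map_le (g : Z → W) (E : Set Z)
    (hg : ∀ z ∈ E, ∀ z' ∈ E, dist (g z) (g z') ≤ dist z z')
    (μ ν : Measure Z) (hgμ : AEMeasurable g μ) (hgν : AEMeasurable g ν)
    (S T : Finset Z) (hSE : (↑S : Set Z) ⊆ E) (hTE : (↑T : Set Z) ⊆ E)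
    (hS : μ ((↑S : Set Z)ᶜ) = 0) (hT : ν ((↑T : Set Z)ᶜ) = 0) :
    levyProkhorovEDist (μ.map g) (ν.map g) ≤ levyProkhorovEDist μ ν := by
  rw [levyProkhorovEDist, levyProkhorovEDist]
  apply sInf_le_sInf
  intro ε hε
  intro B hB
  exact ⟨lp_side g E hg μ ν hgμ hgν S T hSE hTE hS hT ε (fun B hB => (hε B hB).1) hB,
         lp_side g E hg ν μ hgν hgμ T S hTE hSE hT hS ε (fun B hB => (hε B hB).2) hB⟩

lemma pm_coe_one {Ω : Type*} [MeasurableSpace Ω] (P : ProbabilityMeasure Ω) (s : Set Ω)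
    (h : P.toMeasure s = 1) : P s = 1 := by
  have h2 : (P s : ℝ≥0∞) = 1 := by
    rw [ProbabilityMeasure.ennreal_coeFn_eq_coeFn_toMeasure, h]
  exact_mod_cast h2

lemma pm_toMeasure_one {Ω : Type*} [MeasurableSpace Ω] (P : ProbabilityMeasure Ω) (s : Set Ω)
    (h : P s = 1) : P.toMeasure s = 1 := by
  rw [← ProbabilityMeasure.ennreal_coeFn_eq_coeFn_toMeasure, h]
  rfl

end LP

end DTCaux

/-- Extract a single support finset with all the needed properties. -/
lemma Bmeas_exists_support {n : ℕ} {Z : Type*} [MetricSpace Z] (μ : Bmeas n Z) {A : Set Z}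
    (hA : DistributedOn μ A) :
    ∃ S : Finset Z, S.card ≤ n ∧ (↑S : Set Z) ⊆ A ∧
      letI : MeasurableSpace Z := borel Z
      (Bmeas.meas μ).toMeasure (↑S : Set Z) = 1 := by
  classical
  letI : MeasurableSpace Z := borel Z
  haveI : BorelSpace Z := ⟨rfl⟩
  obtain ⟨S₁, hc, h1⟩ := μ.2
  obtain ⟨S₂, hsub, h2⟩ := hA
  have e1 : (Bmeas.meas μ).toMeasure (↑S₁ : Set Z) = 1 := DTCaux.pm_toMeasure_one _ _ h1
  have e2 : (Bmeas.meas μ).toMeasure (↑S₂ : Set Z) = 1 := DTCaux.pm_toMeasure_one _ _ h2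
  refine ⟨S₁ ∩ S₂, (Finset.card_le_card Finset.inter_subset_left).trans hc,
    fun z hz => hsub (by exact_mod_cast (Finset.mem_of_mem_inter_right (by exact_mod_cast hz))), ?_⟩
  rw [← prob_compl_eq_zero_iff ((S₁ ∩ S₂).finite_toSet.measurableSet)]
  have : ((↑(S₁ ∩ S₂) : Set Z))ᶜ ⊆ ((↑S₁ : Set Z))ᶜ ∪ ((↑S₂ : Set Z))ᶜ := by
    rw [Finset.coe_inter, Set.compl_inter]
  apply measure_mono_null this
  apply measure_union_null
  · rw [prob_compl_eq_zero_iff S₁.finite_toSet.measurableSet]; exact e1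
  · rw [prob_compl_eq_zero_iff S₂.finite_toSet.measurableSet]; exact e2


/-- For every `m ≥ 2` and path-connected metric space `X`, `dTC_m(X) ≤ dcat(X^m)`. -/
theorem dTC_le_dcat_pow (m : ℕ) (hm : 2 ≤ m) (X : Type) [MetricSpace X]
    [PathConnectedSpace X] :
    dTC m X ≤ dcat (Fin m → X) := by
  classical
  apply sInf_le_sInf
  rintro c ⟨k, rfl, y₀, H, hHcont, hHdist⟩
  refine ⟨k, rfl, ?_⟩
  letI : MeasurableSpace (PathSp (Fin m → X)) := borel _
  haveI : BorelSpace (PathSp (Fin m → X)) := ⟨rfl⟩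
  letI : MeasurableSpace (PathSp X) := borel _
  haveI : BorelSpace (PathSp X) := ⟨rfl⟩
  haveI : Nonempty X := PathConnectedSpace.nonempty
  haveI : Nonempty (PathSp X) := ⟨ContinuousMap.const _ (Classical.arbitrary X)⟩
  set g : PathSp (Fin m → X) → PathSp X := DTCaux.navMap m hm y₀ with hgdef
  set E : Set (PathSp (Fin m → X)) := {φ | φ 1 = y₀} with hEdef
  have hglip : ∀ z ∈ E, ∀ z' ∈ E, dist (g z) (g z') ≤ dist z z' :=
    fun z hz z' hz' => DTCaux.navMap_dist m hm y₀ z z' hz hz'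
  have hsupp : ∀ x, ∃ S : Finset (PathSp (Fin m → X)), S.card ≤ k+1 ∧
      (↑S : Set _) ⊆ {φ : PathSp (Fin m → X) | φ 0 = x ∧ φ 1 = y₀} ∧
      (Bmeas.meas (H x)).toMeasure (↑S : Set _) = 1 :=
    fun x => Bmeas_exists_support (H x) (hHdist x)
  choose Sx hcard hsub hfull using hsupp
  have hSE : ∀ x, (↑(Sx x) : Set _) ⊆ E := fun x z hz => ((hsub x) hz).2
  have hSnull : ∀ x, (Bmeas.meas (H x)).toMeasure ((↑(Sx x) : Set _)ᶜ) = 0 := fun x =>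
    (prob_compl_eq_zero_iff ((Sx x).finite_toSet.measurableSet)).mpr (hfull x)
  have haem : ∀ x, AEMeasurable g ((Bmeas.meas (H x)).toMeasure) := fun x =>
    DTCaux.aemeasurable_of_null_compl_finset g _ (Sx x) (hSnull x)
  set ν : (Fin m → X) → Measure (PathSp X) :=
    fun x => ((Bmeas.meas (H x)).toMeasure).map g with hνdef
  have hprob : ∀ x, IsProbabilityMeasure (ν x) := fun x => Measure.isProbabilityMeasure_map (haem x)
  have hmeasS : ∀ x, (ν x) (↑((Sx x).image g) : Set (PathSp X)) = 1 := by
    intro x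
    rw [Measure.map_apply_of_aemeasurable (haem x) ((Sx x).image g).finite_toSet.measurableSet]
    have hsub' : (↑(Sx x) : Set _) ⊆ g ⁻¹' (↑((Sx x).image g) : Set (PathSp X)) := by
      intro z hz
      simp only [Finset.coe_image, Set.mem_preimage]
      exact Set.mem_image_of_mem g hz
    refine le_antisymm prob_le_one ?_
    calc (1 : ENNReal) = (Bmeas.meas (H x)).toMeasure (↑(Sx x) : Set _) := (hfull x).symm
    _ ≤ _ := measure_mono hsub'
  set sAlg : (Fin m → X) → Bmeas (k+1) (PathSp X) := fun x =>
    ⟨LevyProkhorov.toMeasureEquiv.symm (⟨ν x, hprob x⟩ : ProbabilityMeasure (PathSp X)),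
      (Sx x).image g, Finset.card_image_le.trans (hcard x), by
        exact DTCaux.pm_coe_one _ _ (hmeasS x)⟩ with hsAlgdef
  have hmeas_sAlg : ∀ x, Bmeas.meas (sAlg x) = ⟨ν x, hprob x⟩ := fun x => rfl
  refine ⟨sAlg, ?_, ?_⟩
  · -- continuity
    have hHval : Continuous (fun x => (H x).1) := continuous_subtype_val.comp hHcont
    have hkey : ∀ x x', dist (sAlg x).1 (sAlg x').1 ≤ dist (H x).1 (H x').1 := by
      intro x x'
      rw [LevyProkhorov.dist_probabilityMeasure_def, LevyProkhorov.dist_probabilityMeasure_def]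
      rw [levyProkhorovDist, levyProkhorovDist]
      apply ENNReal.toReal_mono (levyProkhorovEDist_ne_top _ _)
      exact DTCaux.lp_map_le g E hglip _ _ (haem x) (haem x') (Sx x) (Sx x')
        (hSE x) (hSE x') (hSnull x) (hSnull x')
    apply Continuous.subtype_mk
    rw [Metric.continuous_iff]
    intro x ε hε
    obtain ⟨δ, hδ, hd⟩ := Metric.continuous_iff.1 hHval x ε hε
    exact ⟨δ, hδ, fun x' hx' => lt_of_le_of_lt (hkey x' x) (hd x' hx')⟩
  · -- distribution property
    intro x
    refine ⟨(Sx x).image g, ?_, ?_⟩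
    · intro ψ hψ
      simp only [Finset.coe_image] at hψ
      obtain ⟨φ, hφS, rfl⟩ := hψ
      obtain ⟨h0, h1⟩ := hsub x hφS
      intro j
      rw [hgdef]
      rw [DTCaux.navMap_tpt m hm y₀ φ h1 j, h0]
    · exact DTCaux.pm_coe_one _ _ (hmeasS x)
end
end

section
/- The sequence of sequential distributional topological complexities is non-decreasing: for every m ≥ 2 and path-connected metric space X, dTC_m(X) ≤ dTC_{m+1}(X). -/
open MeasureTheory unitInterval

noncomputable section

section Aux

open Metric Set ENNReal NNReal

lemma levyProkhorovEDist_map_le {Z Z' : Type*} [MeasurableSpace Z] [MetricSpace Z]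
    [OpensMeasurableSpace Z] [MeasurableSpace Z'] [MetricSpace Z'] [BorelSpace Z']
    (f : Z → Z') (hf : LipschitzWith 1 f) (μ ν : Measure Z) :
    levyProkhorovEDist (μ.map f) (ν.map f) ≤ levyProkhorovEDist μ ν := by
  have hfm : Measurable f := hf.continuous.measurable
  have sub : ∀ (ε : ℝ) (B : Set Z'),
      thickening ε (f ⁻¹' B) ⊆ f ⁻¹' (thickening ε B) := by
    intro ε B x hx
    rcases Metric.mem_thickening_iff.mp hx with ⟨z, hz, hdist⟩
    refine Set.mem_preimage.mpr (Metric.mem_thickening_iff.mpr ⟨f z, hz, ?_⟩)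
    calc dist (f x) (f z) ≤ 1 * dist x z := hf.dist_le_mul x z
    _ < ε := by simpa using hdist
  have key : ∀ (μ ν : Measure Z) (ε : ℝ≥0∞) (B : Set Z'),
      levyProkhorovEDist μ ν < ε → MeasurableSet B →
      (μ.map f) B ≤ (ν.map f) (thickening ε.toReal B) + ε := by
    intro μ ν ε B hε hB
    rw [Measure.map_apply hfm hB, Measure.map_apply hfm isOpen_thickening.measurableSet]
    calc μ (f ⁻¹' B) ≤ ν (thickening ε.toReal (f ⁻¹' B)) + ε :=
          left_measure_le_of_levyProkhorovEDist_lt hε (hfm hB)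
    _ ≤ ν (f ⁻¹' thickening ε.toReal B) + ε :=
          add_le_add_left (measure_mono (sub _ _)) _
  refine levyProkhorovEDist_le_of_forall _ _ _
    (fun ε B hε hεtop hB => ⟨key μ ν ε B hε hB, ?_⟩)
  exact key ν μ ε B (levyProkhorovEDist_comm μ ν ▸ hε) hB

lemma lipschitz_LP_map {Z Z' : Type*} [MeasurableSpace Z] [MetricSpace Z]
    [BorelSpace Z] [MeasurableSpace Z'] [MetricSpace Z'] [BorelSpace Z']
    (f : Z → Z') (hf : LipschitzWith 1 f) :
    LipschitzWith 1 (fun μ : LevyProkhorov (ProbabilityMeasure Z) =>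
      (LevyProkhorov.toMeasureEquiv.symm
        ((LevyProkhorov.toMeasureEquiv μ).map
          hf.continuous.measurable.aemeasurable))) := by
  refine LipschitzWith.of_dist_le_mul (fun μ ν => ?_)
  simp only [NNReal.coe_one, one_mul]
  rw [LevyProkhorov.dist_probabilityMeasure_def, LevyProkhorov.dist_probabilityMeasure_def]
  simp only [LevyProkhorov.toMeasureEquiv_apply, LevyProkhorov.toMeasureEquiv_symm_apply_toMeasure,
    ProbabilityMeasure.toMeasure_map]
  unfold levyProkhorovDist
  apply ENNReal.toReal_mono (levyProkhorovEDist_ne_top _ _)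
  exact levyProkhorovEDist_map_le f hf _ _

lemma map_finset_image_one {Z Z' : Type*} [DecidableEq Z'] [MeasurableSpace Z] [MetricSpace Z]
    [MeasurableSpace Z'] [MetricSpace Z'] [OpensMeasurableSpace Z']
    (f : Z → Z') (hfm : Measurable f) (μ : Measure Z) [IsProbabilityMeasure μ]
    (S : Finset Z) (h : μ (↑S : Set Z) = 1) :
    (μ.map f) (↑(S.image f) : Set Z') = 1 := by
  haveI : IsProbabilityMeasure (μ.map f) := Measure.isProbabilityMeasure_map hfm.aemeasurable
  refine le_antisymm prob_le_one ?_
  rw [Measure.map_apply hfm (Finset.measurableSet _)]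
  calc (1 : ℝ≥0∞) = μ (↑S : Set Z) := h.symm
  _ ≤ μ (f ⁻¹' (↑(S.image f) : Set Z')) := by
      refine measure_mono (fun z hz => ?_)
      simp only [Set.mem_preimage, Finset.coe_image, Set.mem_image, Finset.mem_coe] at *
      exact ⟨z, hz, rfl⟩

lemma probCoe_eq_one_iff {Z : Type*} [MeasurableSpace Z] (μ : ProbabilityMeasure Z)
    (A : Set Z) : μ A = 1 ↔ μ.toMeasure A = 1 := by
  rw [← ProbabilityMeasure.ennreal_coeFn_eq_coeFn_toMeasure]
  exact_mod_cast (ENNReal.coe_eq_one (r := μ A)).symm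

/-- Map on `Bmeas` induced by pushforward along a 1-Lipschitz map. -/
def BmeasMap {Z Z' : Type*} [MetricSpace Z] [MetricSpace Z'] {n : ℕ}
    (f : Z → Z') (hf : LipschitzWith 1 f) (μ : Bmeas n Z) : Bmeas n Z' := by
  letI : MeasurableSpace Z := borel Z
  haveI : BorelSpace Z := ⟨rfl⟩
  letI : MeasurableSpace Z' := borel Z'
  haveI : BorelSpace Z' := ⟨rfl⟩
  refine ⟨LevyProkhorov.toMeasureEquiv.symm
    ((LevyProkhorov.toMeasureEquiv μ.1).map
      hf.continuous.measurable.aemeasurable), ?_⟩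
  obtain ⟨S, hcard, hS⟩ := μ.2
  classical
  refine ⟨S.image f, le_trans (Finset.card_image_le) hcard, ?_⟩
  simp only [Equiv.symm_apply_apply, Equiv.apply_symm_apply]
  rw [probCoe_eq_one_iff, ProbabilityMeasure.toMeasure_map]
  exact map_finset_image_one f hf.continuous.measurable _ S ((probCoe_eq_one_iff _ _).mp hS)

lemma BmeasMap_meas {Z Z' : Type*} [MetricSpace Z] [MetricSpace Z'] {n : ℕ}
    (f : Z → Z') (hf : LipschitzWith 1 f) (μ : Bmeas n Z) :
    letI : MeasurableSpace Z := borel Z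
    haveI : BorelSpace Z := ⟨rfl⟩
    letI : MeasurableSpace Z' := borel Z'
    haveI : BorelSpace Z' := ⟨rfl⟩
    Bmeas.meas (BmeasMap f hf μ) =
      (Bmeas.meas μ).map hf.continuous.measurable.aemeasurable := rfl

lemma BmeasMap_continuous {Z Z' : Type*} [MetricSpace Z] [MetricSpace Z'] {n : ℕ}
    (f : Z → Z') (hf : LipschitzWith 1 f) :
    Continuous (BmeasMap (n := n) f hf) := by
  letI : MeasurableSpace Z := borel Z
  haveI : BorelSpace Z := ⟨rfl⟩
  letI : MeasurableSpace Z' := borel Z'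
  haveI : BorelSpace Z' := ⟨rfl⟩
  exact Continuous.subtype_mk
    ((lipschitz_LP_map f hf).continuous.comp continuous_subtype_val) _

end Aux

/-- The sequence `m ↦ dTC_m(X)` is non-decreasing for `m ≥ 2`. -/
theorem dTC_mono (m : ℕ) (hm : 2 ≤ m) (X : Type) [MetricSpace X] [PathConnectedSpace X] :
    dTC m X ≤ dTC (m + 1) X := by
  classical
  letI : MeasurableSpace (PathSp X) := borel (PathSp X)
  haveI : BorelSpace (PathSp X) := ⟨rfl⟩
  apply sInf_le_sInf
  rintro c ⟨k, rfl, s, hscont, hsdist⟩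
  have hm2 : (2:ℝ) ≤ (m:ℝ) := by exact_mod_cast hm
  have hm0 : (0:ℝ) < (m:ℝ) := by linarith
  have hm1 : (1:ℝ) ≤ (m:ℝ) - 1 := by linarith
  have hr1 : ∀ t : unitInterval, (t : ℝ) * ((m:ℝ) - 1) / m ∈ Set.Icc (0:ℝ) 1 := by
    intro t
    constructor
    · exact div_nonneg (mul_nonneg t.2.1 (by linarith)) hm0.le
    · rw [div_le_one hm0]
      nlinarith [t.2.1, t.2.2]
  let rmap : C(unitInterval, unitInterval) :=
    ⟨fun t => ⟨(t : ℝ) * ((m:ℝ) - 1) / m, hr1 t⟩, by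
      refine Continuous.subtype_mk ?_ _
      exact (continuous_subtype_val.mul continuous_const).div_const _⟩
  let F : PathSp X → PathSp X := fun φ => φ.comp rmap
  have hF : LipschitzWith 1 F := by
    refine LipschitzWith.of_dist_le_mul (fun φ ψ => ?_)
    simp only [NNReal.coe_one, one_mul]
    refine (ContinuousMap.dist_le dist_nonneg).mpr (fun t => ?_)
    exact ContinuousMap.dist_apply_le_dist (rmap t)
  let e : (Fin m → X) → (Fin (m+1) → X) := fun x j => x ⟨min j.1 (m-1), by omega⟩
  have he : Continuous e := continuous_pi fun j => continuous_apply _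
  have hkey : ∀ j : Fin m, rmap (tpt m j) = tpt (m+1) ⟨j.1, by omega⟩ := by
    intro j
    have hjlt := j.isLt
    have hj : (j.1:ℝ) ≤ (m:ℝ) - 1 := by
      have : (j.1:ℝ) + 1 ≤ (m:ℝ) := by exact_mod_cast hjlt
      linarith
    have ha : (j.1:ℝ)/((m:ℝ)-1) ∈ Set.Icc (0:ℝ) 1 :=
      ⟨div_nonneg (Nat.cast_nonneg _) (by linarith),
        (div_le_one (by linarith)).mpr hj⟩
    have hb : (j.1:ℝ)/((m:ℝ) + 1 - 1) ∈ Set.Icc (0:ℝ) 1 := by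
      constructor
      · exact div_nonneg (Nat.cast_nonneg _) (by linarith)
      · rw [div_le_one (by linarith)]
        linarith
    rw [tpt, tpt, Set.projIcc_of_mem _ ha, Set.projIcc_of_mem _ (by push_cast; exact hb)]
    apply Subtype.ext
    have hne : (m:ℝ) - 1 ≠ 0 := by linarith
    show (j.1:ℝ)/((m:ℝ)-1) * ((m:ℝ)-1) / m = _
    push_cast
    field_simp
    rw [add_sub_cancel_right, mul_div_cancel_right₀ _ hm0.ne']
  refine ⟨k, rfl, fun x => BmeasMap F hF (s (e x)),
    ⟨(BmeasMap_continuous F hF).comp (hscont.comp he), ?_⟩⟩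
  intro x
  obtain ⟨S, hsub, hone⟩ := hsdist (e x)
  refine ⟨S.image F, ?_, ?_⟩
  · rintro φ' hφ'
    simp only [Finset.coe_image, Set.mem_image, Finset.mem_coe] at hφ'
    obtain ⟨φ, hφ, rfl⟩ := hφ'
    intro j
    have h1 := hsub hφ ⟨j.1, by omega⟩
    show φ (rmap (tpt m j)) = x j
    rw [hkey j, h1]
    show x ⟨min j.1 (m-1), _⟩ = x j
    congr 1
    exact Fin.ext (by simp; omega)
  · rw [BmeasMap_meas, probCoe_eq_one_iff, ProbabilityMeasure.toMeasure_map]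
    exact map_finset_image_one F hF.continuous.measurable _ S
      ((probCoe_eq_one_iff _ _).mp hone)
end
end

section
/- For every m ≥ 2 and path-connected metric space X, dTC_m(X) ≤ (dTC(X) + 1)^{m−1} − 1, where dTC = dTC_2. -/
open MeasureTheory unitInterval

noncomputable section

-- ===== auxiliary machinery =====
open Metric ENNReal
set_option linter.unusedSectionVars false
set_option maxHeartbeats 1000000

section Helpers
variable {Z : Type*} [MeasurableSpace Z] [MeasurableSingletonClass Z]

lemma meas_finset_eq_sum (μ : Measure Z) (S : Finset Z) :
    μ (S : Set Z) = ∑ x ∈ S, μ {x} := by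
  rw [← Set.biUnion_of_singleton (S : Set Z)]
  exact measure_biUnion_finset (fun x _ y _ hxy => by simp [Set.disjoint_singleton, hxy])
    (fun b _ => measurableSet_singleton b)

lemma meas_inter_of_one (μ : Measure Z) [IsProbabilityMeasure μ] {S : Set Z}
    (hSm : MeasurableSet S) (hS : μ S = 1) (A : Set Z) : μ A = μ (A ∩ S) := by
  have hc : μ Sᶜ = 0 := by
    rw [measure_compl hSm (measure_ne_top μ S), hS, measure_univ, tsub_self]
  have h1 : μ (A \ S) = 0 :=
    le_antisymm (le_trans (measure_mono (Set.diff_subset_compl A S)) hc.le) zero_le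
  rw [← measure_inter_add_diff A hSm, h1, add_zero]

lemma sum_singleton_mul_indicator_le (μ : Measure Z) (S : Finset Z) (A : Set Z) :
    ∑ x ∈ S, μ {x} * A.indicator 1 x ≤ μ A := by
  classical
  have h : ∑ x ∈ S, μ {x} * A.indicator 1 x = ∑ x ∈ S.filter (· ∈ A), μ {x} := by
    rw [Finset.sum_filter]
    refine Finset.sum_congr rfl fun x _ => ?_
    by_cases hx : x ∈ A <;> simp [Set.indicator_apply, hx]
  rw [h, ← meas_finset_eq_sum]
  refine measure_mono fun x hx => ?_
  simp only [Finset.coe_filter, Set.mem_setOf_eq] at hx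
  exact hx.2

lemma sum_singleton_mul_indicator (μ : Measure Z) [IsProbabilityMeasure μ] {S : Finset Z}
    (hS : μ (S : Set Z) = 1) (A : Set Z) :
    ∑ x ∈ S, μ {x} * A.indicator 1 x = μ A := by
  classical
  have h : ∑ x ∈ S, μ {x} * A.indicator 1 x = ∑ x ∈ S.filter (· ∈ A), μ {x} := by
    rw [Finset.sum_filter]
    refine Finset.sum_congr rfl fun x _ => ?_
    by_cases hx : x ∈ A <;> simp [Set.indicator_apply, hx]
  rw [h, ← meas_finset_eq_sum, meas_inter_of_one μ S.measurableSet hS A]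
  congr 1
  ext x
  simp [and_comm]

lemma sum_singleton_eq_one (μ : Measure Z) [IsProbabilityMeasure μ] {S : Finset Z}
    (hS : μ (S : Set Z) = 1) : ∑ x ∈ S, μ {x} = 1 := by
  rw [← meas_finset_eq_sum, hS]

lemma sum_mul_le_lintegral (μ : Measure Z) (S : Finset Z) (f : Z → ℝ≥0∞) :
    ∑ x ∈ S, μ {x} * f x ≤ ∫⁻ x, f x ∂μ := by
  calc ∑ x ∈ S, μ {x} * f x = ∑ x ∈ S, f x * μ {x} := by simp [mul_comm]
  _ = ∫⁻ x in S, f x ∂μ := (lintegral_finset S f).symm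
  _ ≤ ∫⁻ x, f x ∂μ := setLIntegral_le_lintegral _ _

lemma lintegral_eq_sum_of_one (μ : Measure Z) [IsProbabilityMeasure μ] {S : Finset Z}
    (hS : μ (S : Set Z) = 1) (f : Z → ℝ≥0∞) :
    ∫⁻ x, f x ∂μ = ∑ x ∈ S, μ {x} * f x := by
  have hc : μ (↑S : Set Z)ᶜ = 0 := by
    rw [measure_compl S.measurableSet (measure_ne_top μ _), hS, measure_univ, tsub_self]
  rw [← lintegral_add_compl f S.measurableSet]
  rw [setLIntegral_measure_zero _ _ hc, add_zero, lintegral_finset]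
  simp [mul_comm]

lemma singleton_zero_of_not_mem (μ : Measure Z) [IsProbabilityMeasure μ] {S : Finset Z}
    (hS : μ (S : Set Z) = 1) {x : Z} (hx : x ∉ S) : μ {x} = 0 := by
  rw [meas_inter_of_one μ S.measurableSet hS {x}]
  convert measure_empty (μ := μ)
  ext y
  simp only [Set.mem_inter_iff, Set.mem_singleton_iff, Finset.mem_coe, Set.mem_empty_iff_false,
    iff_false, not_and]
  rintro rfl
  exact hx

end Helpers


lemma layercake_compare {Z : Type*} [MeasurableSpace Z] (μ ν : Measure Z)
    [IsProbabilityMeasure μ] [IsProbabilityMeasure ν] (f g : Z → ℝ≥0∞)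
    (hf : Measurable f) (hg : Measurable g) (hf1 : ∀ x, f x ≤ 1)
    (ε : ℝ≥0∞)
    (hcomp : ∀ t : ℝ≥0∞, 0 < t → μ {x | t < f x} ≤ ν {x | t < g x} + ε) :
    ∫⁻ x, f x ∂μ ≤ ∫⁻ x, g x ∂ν + ε := by
  set F : Z → ℝ := fun x => (f x).toReal with hF
  set G : Z → ℝ := fun x => (min (g x) 1).toReal with hG
  have hfne : ∀ x, f x ≠ ∞ := fun x => ((hf1 x).trans_lt one_lt_top).ne
  have h1 : ∫⁻ x, f x ∂μ = ∫⁻ t in Set.Ioi (0:ℝ), μ {a | t < F a} := by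
    rw [← lintegral_eq_lintegral_meas_lt μ (Filter.Eventually.of_forall fun x => toReal_nonneg)
      (hf.ennreal_toReal.aemeasurable)]
    exact lintegral_congr fun x => (ofReal_toReal (hfne x)).symm
  have h2 : ∫⁻ t in Set.Ioi (0:ℝ), ν {a | t < G a} ≤ ∫⁻ x, g x ∂ν := by
    rw [← lintegral_eq_lintegral_meas_lt ν (Filter.Eventually.of_forall fun x => toReal_nonneg)
      ((hg.min measurable_const).ennreal_toReal.aemeasurable)]
    refine lintegral_mono fun x => ?_
    rw [ofReal_toReal (by simp : min (g x) 1 ≠ ∞)]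
    exact min_le_left _ _
  -- split the t-integral
  have hsplit : ∫⁻ t in Set.Ioi (0:ℝ), μ {a | t < F a} =
      ∫⁻ t in Set.Ioo (0:ℝ) 1, μ {a | t < F a} := by
    rw [← Set.Ioo_union_Ici_eq_Ioi (zero_lt_one (α := ℝ)),
      lintegral_union measurableSet_Ici (Set.disjoint_left.mpr fun t ht h1t => absurd h1t (not_le.mpr ht.2))]
    have : ∫⁻ t in Set.Ici (1:ℝ), μ {a | t < F a} = 0 := by
      rw [setLIntegral_congr_fun measurableSet_Ici
        (fun t ht => ?_), lintegral_zero]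
      have : {a | t < F a} = ∅ := by
        ext a
        simp only [Set.mem_setOf_eq, Set.mem_empty_iff_false, iff_false, not_lt]
        calc F a ≤ 1 := by
              rw [hF]
              exact toReal_le_of_le_ofReal zero_le_one (by simpa using hf1 a)
        _ ≤ t := ht
      simp [this]
    rw [this, add_zero]
  rw [h1, hsplit]
  have hbound : ∀ t ∈ Set.Ioo (0:ℝ) 1, μ {a | t < F a} ≤ ν {a | t < G a} + ε := by
    intro t ht
    have hFset : {a | t < F a} = {a | ENNReal.ofReal t < f a} := by
      ext a
      simp only [Set.mem_setOf_eq, hF]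
      rw [ENNReal.ofReal_lt_iff_lt_toReal ht.1.le (hfne a)]
    have hGset : {a | t < G a} = {a | ENNReal.ofReal t < g a} := by
      ext a
      simp only [Set.mem_setOf_eq, hG]
      rw [← ENNReal.ofReal_lt_iff_lt_toReal ht.1.le (by simp : min (g a) 1 ≠ ∞),
        lt_min_iff]
      constructor
      · exact fun h => h.1
      · intro h
        exact ⟨h, by simpa using ht.2⟩
    rw [hFset, hGset]
    exact hcomp _ (by simpa using ht.1)
  calc ∫⁻ t in Set.Ioo (0:ℝ) 1, μ {a | t < F a}
      ≤ ∫⁻ t in Set.Ioo (0:ℝ) 1, (ν {a | t < G a} + ε) := by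
        have hanti : Antitone fun t : ℝ => ν {a | t < G a} :=
          fun s t hst => measure_mono fun a ha => lt_of_le_of_lt hst ha
        have hmeas : Measurable fun t : ℝ => ν {a | t < G a} + ε :=
          hanti.measurable.add_const ε
        exact setLIntegral_mono hmeas hbound
    _ = (∫⁻ t in Set.Ioo (0:ℝ) 1, ν {a | t < G a}) + ε := by
        rw [lintegral_add_right _ measurable_const, setLIntegral_const]
        simp [Real.volume_Ioo]
    _ ≤ (∫⁻ t in Set.Ioi (0:ℝ), ν {a | t < G a}) + ε := by
        gcongr
        exact Set.Ioo_subset_Ioi_self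
    _ ≤ ∫⁻ x, g x ∂ν + ε := by gcongr


section Mix
variable {Z W Y : Type*} [MetricSpace Z] [MetricSpace W] [MetricSpace Y]
  [MeasurableSpace Z] [BorelSpace Z] [MeasurableSpace W] [BorelSpace W]
  [MeasurableSpace Y] [BorelSpace Y]

noncomputable def mix (μ₁ : Measure Z) (μ₂ : Measure W) (S₁ : Finset Z) (S₂ : Finset W)
    (F : Z × W → Y) : Measure Y :=
  ∑ p ∈ S₁ ×ˢ S₂, (μ₁ {p.1} * μ₂ {p.2}) • Measure.dirac (F p)

lemma mix_apply (μ₁ : Measure Z) (μ₂ : Measure W) (S₁ : Finset Z) (S₂ : Finset W)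
    (F : Z × W → Y) {B : Set Y} (hB : MeasurableSet B) :
    mix μ₁ μ₂ S₁ S₂ F B
      = ∑ φ ∈ S₁, ∑ ψ ∈ S₂, μ₁ {φ} * μ₂ {ψ} * B.indicator 1 (F (φ, ψ)) := by
  rw [mix, Measure.finset_sum_apply, Finset.sum_product]
  refine Finset.sum_congr rfl fun φ _ => Finset.sum_congr rfl fun ψ _ => ?_
  rw [Measure.smul_apply, Measure.dirac_apply' _ hB, smul_eq_mul]

lemma mix_prob (μ₁ : Measure Z) (μ₂ : Measure W) [IsProbabilityMeasure μ₁]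
    [IsProbabilityMeasure μ₂] {S₁ : Finset Z} {S₂ : Finset W}
    (hS₁ : μ₁ (S₁ : Set Z) = 1) (hS₂ : μ₂ (S₂ : Set W) = 1) (F : Z × W → Y) :
    IsProbabilityMeasure (mix μ₁ μ₂ S₁ S₂ F) := by
  constructor
  rw [mix_apply μ₁ μ₂ S₁ S₂ F MeasurableSet.univ]
  simp only [Set.indicator_univ, Pi.one_apply, mul_one]
  rw [← Finset.sum_mul_sum, sum_singleton_eq_one μ₁ hS₁, sum_singleton_eq_one μ₂ hS₂, one_mul]

lemma mix_eq_of_subset (μ₁ : Measure Z) (μ₂ : Measure W) [IsProbabilityMeasure μ₁]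
    [IsProbabilityMeasure μ₂] {S₁ S₁' : Finset Z} {S₂ S₂' : Finset W}
    (hsub₁ : S₁' ⊆ S₁) (hsub₂ : S₂' ⊆ S₂)
    (h₁ : μ₁ (S₁' : Set Z) = 1) (h₂ : μ₂ (S₂' : Set W) = 1) (F : Z × W → Y) :
    mix μ₁ μ₂ S₁ S₂ F = mix μ₁ μ₂ S₁' S₂' F := by
  refine (Finset.sum_subset (Finset.product_subset_product hsub₁ hsub₂) fun p hp hp' => ?_).symm
  have : μ₁ {p.1} * μ₂ {p.2} = 0 := by
    rcases Finset.mem_product.not.mp hp' with h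
    rw [not_and_or] at h
    rcases h with h | h
    · rw [singleton_zero_of_not_mem μ₁ h₁ h, zero_mul]
    · rw [singleton_zero_of_not_mem μ₂ h₂ h, mul_zero]
  rw [this, zero_smul]

lemma mix_congr (μ₁ : Measure Z) (μ₂ : Measure W) [IsProbabilityMeasure μ₁]
    [IsProbabilityMeasure μ₂] {S₁ S₁' : Finset Z} {S₂ S₂' : Finset W}
    (h₁ : μ₁ (S₁ : Set Z) = 1) (h₁' : μ₁ (S₁' : Set Z) = 1)
    (h₂ : μ₂ (S₂ : Set W) = 1) (h₂' : μ₂ (S₂' : Set W) = 1) (F : Z × W → Y) :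
    mix μ₁ μ₂ S₁ S₂ F = mix μ₁ μ₂ S₁' S₂' F := by
  classical
  have hi₁ : μ₁ ((S₁ ∩ S₁' : Finset Z) : Set Z) = 1 := by
    rw [Finset.coe_inter, ← meas_inter_of_one μ₁ S₁'.measurableSet h₁', h₁]
  have hi₂ : μ₂ ((S₂ ∩ S₂' : Finset W) : Set W) = 1 := by
    rw [Finset.coe_inter, ← meas_inter_of_one μ₂ S₂'.measurableSet h₂', h₂]
  rw [mix_eq_of_subset μ₁ μ₂ Finset.inter_subset_left Finset.inter_subset_left hi₁ hi₂ F,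
    mix_eq_of_subset μ₁ μ₂ Finset.inter_subset_right Finset.inter_subset_right hi₁ hi₂ F]

lemma indicator_slice_measurable {U : Set (Z × W)} (hU : IsOpen U) (ψ : W) :
    Measurable fun φ : Z => U.indicator (1 : Z × W → ℝ≥0∞) (φ, ψ) := by
  have : (fun φ : Z => U.indicator (1 : Z × W → ℝ≥0∞) (φ, ψ))
      = Set.indicator {φ : Z | (φ, ψ) ∈ U} (1 : Z → ℝ≥0∞) := by
    ext φ
    by_cases h : (φ, ψ) ∈ U <;> simp [Set.indicator_apply, h]
  rw [this]
  exact measurable_one.indicator ((hU.preimage (continuous_id.prodMk continuous_const)).measurableSet)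

lemma mix_le_mix_thickening (F : Z × W → Y) (M : Set (Z × W))
    (hFM : ∀ p ∈ M, ∀ q ∈ M, dist (F p) (F q) ≤ dist p q)
    (hsect : ∀ (B : Set Y), MeasurableSet B → ∀ φ : Z,
      MeasurableSet {ψ : W | (φ, ψ) ∈ F ⁻¹' B ∩ M})
    (μ₁ ν₁ : Measure Z) (μ₂ ν₂ : Measure W)
    [IsProbabilityMeasure μ₁] [IsProbabilityMeasure ν₁]
    [IsProbabilityMeasure μ₂] [IsProbabilityMeasure ν₂]
    {S₁ : Finset Z} {S₂ : Finset W} {T₁ : Finset Z} {T₂ : Finset W}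
    (hS₁ : μ₁ (S₁ : Set Z) = 1) (hS₂ : μ₂ (S₂ : Set W) = 1)
    (hT₁ : ν₁ (T₁ : Set Z) = 1) (hT₂ : ν₂ (T₂ : Set W) = 1)
    (hSM : ∀ φ ∈ S₁, ∀ ψ ∈ S₂, (φ, ψ) ∈ M) (hTM : ∀ φ ∈ T₁, ∀ ψ ∈ T₂, (φ, ψ) ∈ M)
    (ε₁ ε₂ : ℝ≥0∞) (hε₁ : ε₁ ≠ ∞) (hε₂ : ε₂ ≠ ∞)
    (h₁ : ∀ A : Set Z, MeasurableSet A → μ₁ A ≤ ν₁ (thickening ε₁.toReal A) + ε₁)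
    (h₂ : ∀ A : Set W, MeasurableSet A → μ₂ A ≤ ν₂ (thickening ε₂.toReal A) + ε₂)
    {B : Set Y} (hB : MeasurableSet B) :
    mix μ₁ μ₂ S₁ S₂ F B
      ≤ mix ν₁ ν₂ T₁ T₂ F (thickening (ε₁ + ε₂).toReal B) + (ε₁ + ε₂) := by
  set T : Set (Z × W) := F ⁻¹' B ∩ M with hTdef
  set C : Set (Z × W) := thickening ε₂.toReal T with hCdef
  set D : Set (Z × W) := thickening ε₁.toReal C with hDdef
  have hCopen : IsOpen C := isOpen_thickening
  have hDopen : IsOpen D := isOpen_thickening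
  set f : Z → ℝ≥0∞ := fun φ => ∑ ψ ∈ T₂, ν₂ {ψ} * C.indicator 1 (φ, ψ) with hfdef
  set g : Z → ℝ≥0∞ := fun φ => ∑ ψ ∈ T₂, ν₂ {ψ} * D.indicator 1 (φ, ψ) with hgdef
  have hf_eq : ∀ φ, f φ = ν₂ {ψ | (φ, ψ) ∈ C} := by
    intro φ
    rw [hfdef, ← sum_singleton_mul_indicator ν₂ hT₂ {ψ | (φ, ψ) ∈ C}]
    exact Finset.sum_congr rfl fun ψ _ => by
      by_cases h : (φ, ψ) ∈ C <;> simp [Set.indicator_apply, h]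
  have hf1 : ∀ φ, f φ ≤ 1 := fun φ => by rw [hf_eq φ]; exact prob_le_one
  have hf_m : Measurable f :=
    Finset.measurable_sum _ fun ψ _ => (indicator_slice_measurable hCopen ψ).const_mul _
  have hg_m : Measurable g :=
    Finset.measurable_sum _ fun ψ _ => (indicator_slice_measurable hDopen ψ).const_mul _
  -- Step 1
  have step1 : mix μ₁ μ₂ S₁ S₂ F B = ∑ φ ∈ S₁, μ₁ {φ} * μ₂ {ψ | (φ, ψ) ∈ T} := by
    rw [mix_apply μ₁ μ₂ S₁ S₂ F hB]
    refine Finset.sum_congr rfl fun φ hφ => ?_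
    rw [← sum_singleton_mul_indicator μ₂ hS₂ {ψ | (φ, ψ) ∈ T}, Finset.mul_sum]
    refine Finset.sum_congr rfl fun ψ hψ => ?_
    rw [mul_assoc]
    congr 1
    congr 1
    have hM : (φ, ψ) ∈ M := hSM φ hφ ψ hψ
    by_cases h : (φ, ψ) ∈ T
    · simp [Set.indicator_apply, h, show F (φ, ψ) ∈ B from h.1]
    · have hFB : F (φ, ψ) ∉ B := fun hc => h ⟨hc, hM⟩
      simp [Set.indicator_apply, h, hFB]
  -- Step 2
  have step2 : ∀ φ ∈ S₁, μ₂ {ψ | (φ, ψ) ∈ T} ≤ f φ + ε₂ := by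
    intro φ _
    have hms : MeasurableSet {ψ : W | (φ, ψ) ∈ T} := hsect B hB φ
    refine (h₂ _ hms).trans ?_
    rw [hf_eq φ]
    gcongr
    intro ψ hψ
    rcases mem_thickening_iff.mp hψ with ⟨z, hz, hd⟩
    refine mem_thickening_iff.mpr ⟨(φ, z), hz, ?_⟩
    rw [Prod.dist_eq, dist_self]
    simpa [max_eq_right dist_nonneg] using hd
  have step3 : mix μ₁ μ₂ S₁ S₂ F B ≤ ∫⁻ x, f x ∂μ₁ + ε₂ := by
    rw [step1]
    calc ∑ φ ∈ S₁, μ₁ {φ} * μ₂ {ψ | (φ, ψ) ∈ T}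
        ≤ ∑ φ ∈ S₁, μ₁ {φ} * (f φ + ε₂) :=
          Finset.sum_le_sum fun φ hφ => mul_le_mul_right (step2 φ hφ) _
      _ = (∑ φ ∈ S₁, μ₁ {φ} * f φ) + (∑ φ ∈ S₁, μ₁ {φ}) * ε₂ := by
          rw [Finset.sum_mul]
          rw [← Finset.sum_add_distrib]
          exact Finset.sum_congr rfl fun φ _ => by ring
      _ ≤ ∫⁻ x, f x ∂μ₁ + ε₂ := by
          rw [sum_singleton_eq_one μ₁ hS₁, one_mul]
          gcongr
          exact sum_mul_le_lintegral μ₁ S₁ f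
  -- Step 4 : layer cake comparison
  have step4 : ∫⁻ x, f x ∂μ₁ ≤ ∫⁻ x, g x ∂ν₁ + ε₁ := by
    refine layercake_compare μ₁ ν₁ f g hf_m hg_m hf1 ε₁ fun t ht => ?_
    have hms : MeasurableSet {x : Z | t < f x} := hf_m measurableSet_Ioi
    refine (h₁ _ hms).trans ?_
    gcongr
    intro φ' hφ'
    rcases mem_thickening_iff.mp hφ' with ⟨φ, hφ, hd⟩
    have hfg : f φ ≤ g φ' := by
      refine Finset.sum_le_sum fun ψ _ => ?_
      gcongr
      by_cases h : (φ, ψ) ∈ C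
      · have : (φ', ψ) ∈ D := by
          refine mem_thickening_iff.mpr ⟨(φ, ψ), h, ?_⟩
          rw [Prod.dist_eq, dist_self]
          simpa [max_eq_left dist_nonneg] using hd
        simp [Set.indicator_apply, h, this]
      · simp [Set.indicator_apply, h]
    exact lt_of_lt_of_le hφ hfg
  -- Step 5
  have step5 : ∫⁻ x, g x ∂ν₁ ≤ mix ν₁ ν₂ T₁ T₂ F (thickening (ε₁ + ε₂).toReal B) := by
    rw [lintegral_eq_sum_of_one ν₁ hT₁ g,
      mix_apply ν₁ ν₂ T₁ T₂ F (isOpen_thickening.measurableSet)]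
    refine Finset.sum_le_sum fun φ hφ => ?_
    rw [Finset.mul_sum]
    refine Finset.sum_le_sum fun ψ hψ => ?_
    rw [← mul_assoc]
    gcongr
    by_cases h : (φ, ψ) ∈ D
    · have hsub : D ⊆ thickening (ε₁ + ε₂).toReal T := by
        rw [hDdef, hCdef, toReal_add hε₁ hε₂]
        exact thickening_thickening_subset _ _ _
      rcases mem_thickening_iff.mp (hsub h) with ⟨p, hp, hd⟩
      have hq : F (φ, ψ) ∈ thickening (ε₁ + ε₂).toReal B := by
        refine mem_thickening_iff.mpr ⟨F p, hp.1, ?_⟩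
        exact lt_of_le_of_lt (hFM _ (hTM φ hφ ψ hψ) _ hp.2) hd
      simp [Set.indicator_apply, h, hq]
    · simp [Set.indicator_apply, h]
  calc mix μ₁ μ₂ S₁ S₂ F B ≤ ∫⁻ x, f x ∂μ₁ + ε₂ := step3
    _ ≤ (∫⁻ x, g x ∂ν₁ + ε₁) + ε₂ := by gcongr
    _ ≤ mix ν₁ ν₂ T₁ T₂ F (thickening (ε₁ + ε₂).toReal B) + (ε₁ + ε₂) := by
        rw [add_assoc]
        gcongr

lemma mix_levyProkhorovEDist_le (F : Z × W → Y) (M : Set (Z × W))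
    (hFM : ∀ p ∈ M, ∀ q ∈ M, dist (F p) (F q) ≤ dist p q)
    (hsect : ∀ (B : Set Y), MeasurableSet B → ∀ φ : Z,
      MeasurableSet {ψ : W | (φ, ψ) ∈ F ⁻¹' B ∩ M})
    (μ₁ ν₁ : Measure Z) (μ₂ ν₂ : Measure W)
    [IsProbabilityMeasure μ₁] [IsProbabilityMeasure ν₁]
    [IsProbabilityMeasure μ₂] [IsProbabilityMeasure ν₂]
    {S₁ : Finset Z} {S₂ : Finset W} {T₁ : Finset Z} {T₂ : Finset W}
    (hS₁ : μ₁ (S₁ : Set Z) = 1) (hS₂ : μ₂ (S₂ : Set W) = 1)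
    (hT₁ : ν₁ (T₁ : Set Z) = 1) (hT₂ : ν₂ (T₂ : Set W) = 1)
    (hSM : ∀ φ ∈ S₁, ∀ ψ ∈ S₂, (φ, ψ) ∈ M) (hTM : ∀ φ ∈ T₁, ∀ ψ ∈ T₂, (φ, ψ) ∈ M) :
    levyProkhorovEDist (mix μ₁ μ₂ S₁ S₂ F) (mix ν₁ ν₂ T₁ T₂ F)
      ≤ levyProkhorovEDist μ₁ ν₁ + levyProkhorovEDist μ₂ ν₂ := by
  set d₁ := levyProkhorovEDist μ₁ ν₁ with hd₁
  set d₂ := levyProkhorovEDist μ₂ ν₂ with hd₂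
  have hd₁top : d₁ ≠ ∞ := levyProkhorovEDist_ne_top _ _
  have hd₂top : d₂ ≠ ∞ := levyProkhorovEDist_ne_top _ _
  refine levyProkhorovEDist_le_of_forall _ _ (d₁ + d₂) fun ε B hε hεtop hB => ?_
  set η := ε - (d₁ + d₂) with hη
  have hη0 : η ≠ 0 := by
    rw [hη]
    exact (tsub_pos_of_lt hε).ne'
  set ε₁ := d₁ + η / 2 with hε₁def
  set ε₂ := d₂ + η / 2 with hε₂def
  have hηtop : η ≠ ∞ := by
    rw [hη]
    exact (lt_of_le_of_lt (tsub_le_self) hεtop).ne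
  have hε₁top : ε₁ ≠ ∞ := by
    rw [hε₁def]
    exact ENNReal.add_ne_top.mpr ⟨hd₁top, by simpa using (ENNReal.div_lt_top hηtop (by norm_num)).ne⟩
  have hε₂top : ε₂ ≠ ∞ := by
    rw [hε₂def]
    exact ENNReal.add_ne_top.mpr ⟨hd₂top, by simpa using (ENNReal.div_lt_top hηtop (by norm_num)).ne⟩
  have hlt₁ : d₁ < ε₁ := ENNReal.lt_add_right hd₁top (by
    simp only [ne_eq, ENNReal.div_eq_zero_iff]
    push_neg
    exact ⟨hη0, by norm_num⟩)
  have hlt₂ : d₂ < ε₂ := ENNReal.lt_add_right hd₂top (by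
    simp only [ne_eq, ENNReal.div_eq_zero_iff]
    push_neg
    exact ⟨hη0, by norm_num⟩)
  have hsum : ε₁ + ε₂ = ε := by
    rw [hε₁def, hε₂def]
    calc d₁ + η / 2 + (d₂ + η / 2) = (d₁ + d₂) + (η / 2 + η / 2) := by ring
      _ = (d₁ + d₂) + η := by rw [ENNReal.add_halves]
      _ = ε := by
          rw [hη]
          exact add_tsub_cancel_of_le hε.le
  have h₁ : ∀ A : Set Z, MeasurableSet A → μ₁ A ≤ ν₁ (thickening ε₁.toReal A) + ε₁ :=
    fun A hA => left_measure_le_of_levyProkhorovEDist_lt hlt₁ hA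
  have h₁' : ∀ A : Set Z, MeasurableSet A → ν₁ A ≤ μ₁ (thickening ε₁.toReal A) + ε₁ :=
    fun A hA => right_measure_le_of_levyProkhorovEDist_lt hlt₁ hA
  have h₂ : ∀ A : Set W, MeasurableSet A → μ₂ A ≤ ν₂ (thickening ε₂.toReal A) + ε₂ :=
    fun A hA => left_measure_le_of_levyProkhorovEDist_lt hlt₂ hA
  have h₂' : ∀ A : Set W, MeasurableSet A → ν₂ A ≤ μ₂ (thickening ε₂.toReal A) + ε₂ :=
    fun A hA => right_measure_le_of_levyProkhorovEDist_lt hlt₂ hA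
  constructor
  · have := mix_le_mix_thickening F M hFM hsect μ₁ ν₁ μ₂ ν₂ hS₁ hS₂ hT₁ hT₂ hSM hTM
      ε₁ ε₂ hε₁top hε₂top h₁ h₂ hB
    rw [hsum] at this
    exact this
  · have := mix_le_mix_thickening F M hFM hsect ν₁ μ₁ ν₂ μ₂ hT₁ hT₂ hS₁ hS₂ hTM hSM
      ε₁ ε₂ hε₁top hε₂top h₁' h₂' hB
    rw [hsum] at this
    exact this



lemma mix_image_one (μ₁ : Measure Z) (μ₂ : Measure W) [IsProbabilityMeasure μ₁]
    [IsProbabilityMeasure μ₂] {S₁ : Finset Z} {S₂ : Finset W}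
    (hS₁ : μ₁ (S₁ : Set Z) = 1) (hS₂ : μ₂ (S₂ : Set W) = 1) (F : Z × W → Y)
    [DecidableEq Y] :
    mix μ₁ μ₂ S₁ S₂ F (((S₁ ×ˢ S₂).image F : Finset Y) : Set Y) = 1 := by
  rw [mix_apply _ _ _ _ _ ((S₁ ×ˢ S₂).image F).measurableSet]
  have key : ∀ φ ∈ S₁, ∀ ψ ∈ S₂,
      (((S₁ ×ˢ S₂).image F : Finset Y) : Set Y).indicator (1 : Y → ℝ≥0∞) (F (φ, ψ)) = 1 := by
    intro φ hφ ψ hψ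
    rw [Set.indicator_of_mem]
    · rfl
    · exact Finset.mem_coe.mpr
        (Finset.mem_image_of_mem F (Finset.mem_product.mpr ⟨hφ, hψ⟩))
  calc ∑ φ ∈ S₁, ∑ ψ ∈ S₂, μ₁ {φ} * μ₂ {ψ}
        * (((S₁ ×ˢ S₂).image F : Finset Y) : Set Y).indicator 1 (F (φ, ψ))
      = ∑ φ ∈ S₁, ∑ ψ ∈ S₂, μ₁ {φ} * μ₂ {ψ} := by
        refine Finset.sum_congr rfl fun φ hφ => Finset.sum_congr rfl fun ψ hψ => ?_
        rw [key φ hφ ψ hψ, mul_one]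
    _ = 1 := by
        rw [← Finset.sum_mul_sum, sum_singleton_eq_one μ₁ hS₁, sum_singleton_eq_one μ₂ hS₂,
          one_mul]

lemma prob_coe_one {Z' : Type*} [MeasurableSpace Z'] {μ : ProbabilityMeasure Z'} {A : Set Z'} :
    μ A = 1 ↔ μ.toMeasure A = 1 := by
  rw [← ProbabilityMeasure.ennreal_coeFn_eq_coeFn_toMeasure]
  exact ENNReal.coe_eq_one.symm

section Glue
variable {X : Type*} [MetricSpace X]

/-- clamp a real number into the unit interval -/
noncomputable def pIcc (r : ℝ) : unitInterval := Set.projIcc 0 1 zero_le_one r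

lemma pIcc_coe {r : ℝ} (h0 : 0 ≤ r) (h1 : r ≤ 1) : ((pIcc r : unitInterval) : ℝ) = r := by
  simp [pIcc, Set.projIcc_of_mem, Set.mem_Icc.mpr ⟨h0, h1⟩]

lemma pIcc_one : pIcc 1 = (1 : unitInterval) := by
  simp [pIcc]

lemma pIcc_zero : pIcc 0 = (0 : unitInterval) := by
  simp [pIcc]

noncomputable def glueFun (a : ℝ) (φ ψ : PathSp X) : unitInterval → X := fun t =>
  if (t : ℝ) ≤ a then φ (pIcc ((t : ℝ) / a)) else ψ (pIcc (((t : ℝ) - a) / (1 - a)))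

lemma glueFun_continuous (a : ℝ) (ha : 0 < a) {φ ψ : PathSp X} (h : φ 1 = ψ 0) :
    Continuous (glueFun a φ ψ) := by
  apply Continuous.if_le
  · exact φ.continuous.comp ((continuous_projIcc).comp (continuous_subtype_val.div_const a))
  · exact ψ.continuous.comp ((continuous_projIcc).comp
      ((continuous_subtype_val.sub continuous_const).div_const (1 - a)))
  · exact continuous_subtype_val
  · exact continuous_const
  · intro t ht
    rw [ht, div_self ha.ne', sub_self, zero_div, pIcc_one, pIcc_zero, h]

noncomputable def glueC (a : ℝ) (ha : 0 < a) (p : PathSp X × PathSp X) (h : p.1 1 = p.2 0) :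
    PathSp X := ⟨glueFun a p.1 p.2, glueFun_continuous a ha h⟩

open Classical in
/-- Concatenation map with junction at `a`; garbage value off the matching set. -/
noncomputable def concat (a : ℝ) (ha : 0 < a) : PathSp X × PathSp X → PathSp X := fun p =>
  if h : p.1 1 = p.2 0 then glueC a ha p h else ContinuousMap.const _ (p.1 0)

/-- the matching set -/
def Mset (X : Type*) [MetricSpace X] : Set (PathSp X × PathSp X) :=
  {p | p.1 1 = p.2 0}

lemma concat_eq_glueC (a : ℝ) (ha : 0 < a) {p : PathSp X × PathSp X} (h : p.1 1 = p.2 0) :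
    concat a ha p = glueC a ha p h := dif_pos h

lemma concat_lipschitz_on (a : ℝ) (ha : 0 < a) {p q : PathSp X × PathSp X}
    (hp : p ∈ Mset X) (hq : q ∈ Mset X) :
    dist (concat a ha p) (concat a ha q) ≤ dist p q := by
  rw [concat_eq_glueC a ha hp, concat_eq_glueC a ha hq]
  rw [ContinuousMap.dist_le dist_nonneg]
  intro t
  show dist (glueFun a p.1 p.2 t) (glueFun a q.1 q.2 t) ≤ _
  rw [glueFun, glueFun]
  by_cases h : (t : ℝ) ≤ a
  · rw [if_pos h, if_pos h]
    exact (ContinuousMap.dist_apply_le_dist _).trans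
      (by rw [Prod.dist_eq]; exact le_max_left _ _)
  · rw [if_neg h, if_neg h]
    exact (ContinuousMap.dist_apply_le_dist _).trans
      (by rw [Prod.dist_eq]; exact le_max_right _ _)

lemma concat_lipschitz_left (a : ℝ) (ha : 0 < a) (φ : PathSp X) {ψ ψ' : PathSp X}
    (h : φ 1 = ψ 0) (h' : φ 1 = ψ' 0) :
    dist (concat a ha (φ, ψ)) (concat a ha (φ, ψ')) ≤ dist ψ ψ' := by
  refine (concat_lipschitz_on a ha h h').trans ?_
  rw [Prod.dist_eq]
  simp only [dist_self]
  exact max_le dist_nonneg le_rfl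

lemma mset_closed : IsClosed (Mset X) := by
  have : Mset X = (fun p : PathSp X × PathSp X => (p.1 1, p.2 0)) ⁻¹' (Set.diagonal X) := rfl
  rw [this]
  exact isClosed_diagonal.preimage
    (((continuous_eval_const 1).comp continuous_fst).prodMk
      ((continuous_eval_const 0).comp continuous_snd))

section GlueMeas
variable [MeasurableSpace X] [BorelSpace X]

noncomputable instance : MeasurableSpace (PathSp X) := borel _
instance : BorelSpace (PathSp X) := ⟨rfl⟩

lemma concat_slice_measurable (a : ℝ) (ha : 0 < a) (φ : PathSp X) :
    Measurable fun ψ : PathSp X => concat a ha (φ, ψ) := by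
  classical
  set s : Set (PathSp X) := {ψ | φ 1 = ψ 0} with hs
  have hs_closed : IsClosed s := by
    have : s = (fun ψ : PathSp X => ψ 0) ⁻¹' {y | φ 1 = y} := rfl
    rw [this]
    have : {y : X | φ 1 = y} = {φ 1} := by ext y; simp [eq_comm]
    rw [this]
    exact (isClosed_singleton).preimage (continuous_eval_const 0)
  have key : (fun ψ : PathSp X => concat a ha (φ, ψ))
      = fun ψ => if hx : ψ ∈ s then (fun q : s => glueC a ha (φ, (q : PathSp X)) q.2) ⟨ψ, hx⟩
          else (fun _ : ↥sᶜ => ContinuousMap.const _ (φ 0)) ⟨ψ, hx⟩ := by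
    funext ψ
    by_cases h : φ 1 = ψ 0
    · rw [show concat a ha (φ, ψ) = glueC a ha (φ, ψ) h from dif_pos h,
        dif_pos (show ψ ∈ s from h)]
    · rw [show concat a ha (φ, ψ) = ContinuousMap.const _ (φ 0) from dif_neg h,
        dif_neg (show ψ ∉ s from h)]
  rw [key]
  have hlip : LipschitzWith 1 (fun q : s => glueC a ha (φ, (q : PathSp X)) q.2) := by
    refine LipschitzWith.of_dist_le_mul fun q q' => ?_
    rw [NNReal.coe_one, one_mul, Subtype.dist_eq]
    have hq : φ 1 = (q : PathSp X) 0 := q.2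
    have hq' : φ 1 = (q' : PathSp X) 0 := q'.2
    have h1 := concat_lipschitz_left a ha φ hq hq'
    rwa [concat_eq_glueC a ha (p := (φ, (q : PathSp X))) hq,
      concat_eq_glueC a ha (p := (φ, (q' : PathSp X))) hq'] at h1
  exact Measurable.dite (f := fun q : s => glueC a ha (φ, (q : PathSp X)) q.2)
    (g := fun _ : ↥sᶜ => ContinuousMap.const _ (φ 0)) hlip.continuous.measurable
    measurable_const hs_closed.measurableSet

lemma sect_measurable (a : ℝ) (ha : 0 < a) (φ : PathSp X) {B : Set (PathSp X)}
    (hB : MeasurableSet B) :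
    MeasurableSet {ψ : PathSp X | (φ, ψ) ∈ (concat a ha) ⁻¹' B ∩ Mset X} := by
  have hclosed : IsClosed {ψ : PathSp X | φ 1 = ψ 0} := by
    have h1 : {ψ : PathSp X | φ 1 = ψ 0} = (fun ψ : PathSp X => ψ 0) ⁻¹' {y | φ 1 = y} := rfl
    have h2 : {y : X | φ 1 = y} = {φ 1} := by ext y; simp [eq_comm]
    rw [h1, h2]
    exact (isClosed_singleton).preimage (continuous_eval_const 0)
  have h3 : {ψ : PathSp X | (φ, ψ) ∈ (concat a ha) ⁻¹' B ∩ Mset X}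
      = (fun ψ => concat a ha (φ, ψ)) ⁻¹' B ∩ {ψ : PathSp X | φ 1 = ψ 0} := rfl
  rw [h3]
  exact ((concat_slice_measurable a ha φ) hB).inter hclosed.measurableSet


end GlueMeas
end Glue


section PathComp
variable {X : Type*} [MetricSpace X]

lemma tpt_eq_pIcc (m : ℕ) (j : Fin m) : tpt m j = pIcc ((j : ℝ) / ((m : ℝ) - 1)) := rfl

lemma cast_m_pos {m : ℕ} (hm : 2 ≤ m) : (0:ℝ) < (m:ℝ) := by
  have : (2:ℝ) ≤ (m:ℝ) := by exact_mod_cast hm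
  linarith

lemma cast_m1_pos {m : ℕ} (hm : 2 ≤ m) : (0:ℝ) < (m:ℝ) - 1 := by
  have : (2:ℝ) ≤ (m:ℝ) := by exact_mod_cast hm
  linarith

lemma tpt_last (m : ℕ) (hm : 2 ≤ m) : tpt m ⟨m - 1, by omega⟩ = 1 := by
  rw [tpt_eq_pIcc]
  have h1 : ((⟨m - 1, by omega⟩ : Fin m) : ℝ) = (m:ℝ) - 1 := by
    show ((m - 1 : ℕ) : ℝ) = (m:ℝ) - 1
    push_cast [Nat.cast_sub (by omega : 1 ≤ m)]
    ring
  rw [h1, div_self (cast_m1_pos hm).ne', pIcc_one]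

lemma tpt_two_zero : tpt 2 (0 : Fin 2) = 0 := by
  rw [tpt_eq_pIcc]
  norm_num [pIcc_zero]

lemma tpt_two_one : tpt 2 (1 : Fin 2) = 1 := by
  rw [tpt_eq_pIcc]
  norm_num [pIcc_one]

lemma apos (m : ℕ) (hm : 2 ≤ m) : 0 < ((m:ℝ) - 1) / m :=
  div_pos (cast_m1_pos hm) (cast_m_pos hm)

lemma concat_good (m : ℕ) (hm : 2 ≤ m) (x : Fin (m + 1) → X) (φ ψ : PathSp X)
    (hφ : ∀ j : Fin m, φ (tpt m j) = x j.castSucc)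
    (hψ0 : ψ (tpt 2 (0 : Fin 2)) = x ⟨m - 1, by omega⟩)
    (hψ1 : ψ (tpt 2 (1 : Fin 2)) = x (Fin.last m)) :
    (φ 1 = ψ 0) ∧
      ∀ j : Fin (m + 1), concat (((m:ℝ) - 1) / m) (apos m hm) (φ, ψ) (tpt (m + 1) j) = x j := by
  have hm0 : (0:ℝ) < m := cast_m_pos hm
  have hm1 : (0:ℝ) < (m:ℝ) - 1 := cast_m1_pos hm
  set a : ℝ := ((m:ℝ) - 1) / m with hadef
  have ha : 0 < a := apos m hm
  have ha1 : a < 1 := by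
    rw [hadef, div_lt_one hm0]
    linarith
  -- matching
  have hmatch : φ 1 = ψ 0 := by
    have h1 := hφ ⟨m - 1, by omega⟩
    rw [tpt_last m hm] at h1
    have h2 : (Fin.castSucc (⟨m - 1, by omega⟩ : Fin m)) = (⟨m - 1, by omega⟩ : Fin (m + 1)) :=
      rfl
    rw [h1, h2, ← hψ0, tpt_two_zero]
  refine ⟨hmatch, fun j => ?_⟩
  rw [concat_eq_glueC _ _ hmatch]
  show glueFun a φ ψ (tpt (m + 1) j) = x j
  have htj : ((tpt (m + 1) j : unitInterval) : ℝ) = (j : ℝ) / m := by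
    rw [tpt_eq_pIcc]
    have hc : ((m + 1 : ℕ) : ℝ) - 1 = (m : ℝ) := by push_cast; ring
    rw [hc]
    exact pIcc_coe (by positivity) (by
      rw [div_le_one hm0]
      exact_mod_cast Nat.lt_succ_iff.mp j.isLt)
  rw [glueFun, htj]
  by_cases hj : (j : ℕ) < m
  · have hjle : (j : ℝ) ≤ (m : ℝ) - 1 := by
      have : (j:ℕ) ≤ m - 1 := by omega
      have h' : ((j:ℕ) : ℝ) ≤ ((m - 1 : ℕ) : ℝ) := by exact_mod_cast this
      rwa [Nat.cast_sub (by omega : 1 ≤ m), Nat.cast_one] at h'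
    have hra : (j : ℝ) / m ≤ a := by
      rw [hadef, div_le_div_iff_of_pos_right hm0]
      exact hjle
    rw [if_pos hra]
    have harg : ((j : ℝ) / m) / a = (j : ℝ) / ((m:ℝ) - 1) := by
      rw [hadef]
      field_simp
    rw [harg]
    have h4 : pIcc ((j : ℝ) / ((m:ℝ) - 1)) = tpt m ⟨(j : ℕ), hj⟩ := by
      rw [tpt_eq_pIcc]
    rw [h4, hφ ⟨(j : ℕ), hj⟩]
    exact congrArg x (Fin.ext rfl)
  · have hjm : (j : ℕ) = m := by omega
    have hr1 : (j : ℝ) / m = 1 := by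
      rw [show ((j : Fin (m+1)) : ℝ) = (m : ℝ) by exact_mod_cast congrArg (Nat.cast (R := ℝ)) hjm,
        div_self hm0.ne']
    rw [hr1, if_neg (not_le.mpr ha1)]
    have harg : (1 - a) / (1 - a) = 1 := div_self (by linarith)
    rw [harg, pIcc_one, ← tpt_two_one, hψ1]
    exact congrArg x (Fin.ext (show (Fin.last m).1 = j.1 from hjm.symm))

end PathComp


section StepNav
variable {X : Type*} [MetricSpace X]

def frontF (m : ℕ) (x : Fin (m + 1) → X) : Fin m → X := fun j => x j.castSucc

def backF (m : ℕ) (x : Fin (m + 1) → X) : Fin 2 → X := fun j =>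
  if j = 0 then x ⟨m - 1, Nat.lt_succ_of_le (Nat.sub_le m 1)⟩ else x (Fin.last m)

lemma frontF_continuous (m : ℕ) : Continuous (frontF m (X := X)) :=
  continuous_pi fun _ => continuous_apply _

lemma backF_continuous (m : ℕ) : Continuous (backF m (X := X)) := by
  refine continuous_pi fun j => ?_
  by_cases hj : j = 0
  · simpa [backF, hj] using continuous_apply _
  · simpa [backF, hj] using continuous_apply _

lemma step_nav (m K k : ℕ) (hm : 2 ≤ m)
    (S : (Fin m → X) → Bmeas K (PathSp X)) (hS : IsNavAlg m K S)
    (s₂ : (Fin 2 → X) → Bmeas (k + 1) (PathSp X)) (hs₂ : IsNavAlg 2 (k + 1) s₂) :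
    ∃ S' : (Fin (m + 1) → X) → Bmeas (K * (k + 1)) (PathSp X),
      IsNavAlg (m + 1) (K * (k + 1)) S' := by
  classical
  letI : MeasurableSpace X := borel X
  haveI : BorelSpace X := ⟨rfl⟩
  have ha : 0 < ((m:ℝ) - 1) / m := apos m hm
  set F : PathSp X × PathSp X → PathSp X := concat (((m:ℝ) - 1) / m) ha with hFdef
  -- component measures
  set μm : (Fin (m + 1) → X) → Measure (PathSp X) :=
    fun x => (Bmeas.meas (S (frontF m x))).toMeasure with hμm
  set μ2 : (Fin (m + 1) → X) → Measure (PathSp X) :=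
    fun x => (Bmeas.meas (s₂ (backF m x))).toMeasure with hμ2
  have instμm : ∀ x, IsProbabilityMeasure (μm x) := fun x => by
    rw [hμm]; infer_instance
  have instμ2 : ∀ x, IsProbabilityMeasure (μ2 x) := fun x => by
    rw [hμ2]; infer_instance
  set Sw : (Fin (m + 1) → X) → Finset (PathSp X) := fun x => (S (frontF m x)).2.choose with hSwdef
  set sw : (Fin (m + 1) → X) → Finset (PathSp X) := fun x => (s₂ (backF m x)).2.choose with hswdef
  have hSwc : ∀ x, (Sw x).card ≤ K := fun x => ((S (frontF m x)).2.choose_spec).1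
  have hswc : ∀ x, (sw x).card ≤ k + 1 := fun x => ((s₂ (backF m x)).2.choose_spec).1
  have hSw1 : ∀ x, μm x (Sw x : Set (PathSp X)) = 1 :=
    fun x => prob_coe_one.mp ((S (frontF m x)).2.choose_spec).2
  have hsw1 : ∀ x, μ2 x (sw x : Set (PathSp X)) = 1 :=
    fun x => prob_coe_one.mp ((s₂ (backF m x)).2.choose_spec).2
  haveI := instμm; haveI := instμ2
  set Φ : (Fin (m + 1) → X) → Measure (PathSp X) :=
    fun x => mix (μm x) (μ2 x) (Sw x) (sw x) F with hΦdef
  have hΦprob : ∀ x, IsProbabilityMeasure (Φ x) := fun x => by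
    haveI := instμm x; haveI := instμ2 x
    exact mix_prob _ _ (hSw1 x) (hsw1 x) F
  set P : (Fin (m + 1) → X) → ProbabilityMeasure (PathSp X) :=
    fun x => ⟨Φ x, hΦprob x⟩ with hPdef
  -- good finsets
  have hgood : ∀ x : Fin (m + 1) → X, ∃ T₁ T₂ : Finset (PathSp X),
      μm x (T₁ : Set (PathSp X)) = 1 ∧ μ2 x (T₂ : Set (PathSp X)) = 1 ∧
      (∀ φ ∈ T₁, ∀ ψ ∈ T₂, (φ, ψ) ∈ Mset X) ∧
      (∀ φ ∈ T₁, ∀ ψ ∈ T₂, ∀ j : Fin (m + 1), F (φ, ψ) (tpt (m + 1) j) = x j) := by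
    intro x
    obtain ⟨T₁, hT₁g, hT₁1⟩ := hS.2 (frontF m x)
    obtain ⟨T₂, hT₂g, hT₂1⟩ := hs₂.2 (backF m x)
    have key : ∀ φ ∈ T₁, ∀ ψ ∈ T₂,
        (φ 1 = ψ 0) ∧ ∀ j : Fin (m + 1), F (φ, ψ) (tpt (m + 1) j) = x j := by
      intro φ hφ ψ hψ
      have hφg : ∀ j : Fin m, φ (tpt m j) = x j.castSucc := hT₁g hφ
      have hψg : ∀ j : Fin 2, ψ (tpt 2 j) = backF m x j := hT₂g hψ
      have hψ0 : ψ (tpt 2 (0 : Fin 2)) = x ⟨m - 1, by omega⟩ := by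
        rw [hψg 0]
        simp [backF]
      have hψ1 : ψ (tpt 2 (1 : Fin 2)) = x (Fin.last m) := by
        rw [hψg 1]
        simp [backF]
      exact concat_good m hm x φ ψ hφg hψ0 hψ1
    exact ⟨T₁, T₂, prob_coe_one.mp hT₁1, prob_coe_one.mp hT₂1,
      fun φ hφ ψ hψ => (key φ hφ ψ hψ).1, fun φ hφ ψ hψ => (key φ hφ ψ hψ).2⟩
  -- witness finset
  have hcard : ∀ x, ((Sw x ×ˢ sw x).image F).card ≤ K * (k + 1) := fun x =>
    le_trans Finset.card_image_le
      (by rw [Finset.card_product]; exact Nat.mul_le_mul (hSwc x) (hswc x))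
  have himg1 : ∀ x, Φ x (((Sw x ×ˢ sw x).image F : Finset (PathSp X)) : Set (PathSp X)) = 1 :=
    fun x => by
      haveI := instμm x; haveI := instμ2 x
      exact mix_image_one _ _ (hSw1 x) (hsw1 x) F
  set S' : (Fin (m + 1) → X) → Bmeas (K * (k + 1)) (PathSp X) := fun x =>
    ⟨LevyProkhorov.toMeasureEquiv.symm (P x), (Sw x ×ˢ sw x).image F, hcard x,
      prob_coe_one.mpr (himg1 x)⟩ with hS'def
  refine ⟨S', ?_, ?_⟩
  · -- continuity
    refine Continuous.subtype_mk ?_ _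
    rw [Metric.continuous_iff]
    intro x ε hε
    have hc1 : Continuous fun y : Fin (m + 1) → X => (S (frontF m y)).1 :=
      continuous_subtype_val.comp (hS.1.comp (frontF_continuous m))
    have hc2 : Continuous fun y : Fin (m + 1) → X => (s₂ (backF m y)).1 :=
      continuous_subtype_val.comp (hs₂.1.comp (backF_continuous m))
    obtain ⟨δ₁, hδ₁pos, hδ₁⟩ := Metric.continuous_iff.mp hc1 x (ε / 2) (by linarith)
    obtain ⟨δ₂, hδ₂pos, hδ₂⟩ := Metric.continuous_iff.mp hc2 x (ε / 2) (by linarith)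
    refine ⟨min δ₁ δ₂, lt_min hδ₁pos hδ₂pos, fun y hy => ?_⟩
    have h1 := hδ₁ y (lt_of_lt_of_le hy (min_le_left _ _))
    have h2 := hδ₂ y (lt_of_lt_of_le hy (min_le_right _ _))
    obtain ⟨T₁x, T₂x, hx1, hx2, hxM, _⟩ := hgood x
    obtain ⟨T₁y, T₂y, hy1, hy2, hyM, _⟩ := hgood y
    haveI := instμm x; haveI := instμ2 x
    haveI := instμm y; haveI := instμ2 y
    have hΦy : Φ y = mix (μm y) (μ2 y) T₁y T₂y F :=
      mix_congr _ _ (hSw1 y) hy1 (hsw1 y) hy2 F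
    have hΦx : Φ x = mix (μm x) (μ2 x) T₁x T₂x F :=
      mix_congr _ _ (hSw1 x) hx1 (hsw1 x) hx2 F
    have hedist : levyProkhorovEDist (Φ y) (Φ x)
        ≤ levyProkhorovEDist (μm y) (μm x) + levyProkhorovEDist (μ2 y) (μ2 x) := by
      rw [hΦy, hΦx]
      exact mix_levyProkhorovEDist_le F (Mset X)
        (fun p hp q hq => concat_lipschitz_on _ ha hp hq)
        (fun B hB φ => sect_measurable _ ha φ hB)
        (μm y) (μm x) (μ2 y) (μ2 x) hy1 hy2 hx1 hx2 hyM hxM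
    have hne1 : levyProkhorovEDist (μm y) (μm x) ≠ ∞ := levyProkhorovEDist_ne_top _ _
    have hne2 : levyProkhorovEDist (μ2 y) (μ2 x) ≠ ∞ := levyProkhorovEDist_ne_top _ _
    calc dist ((LevyProkhorov.toMeasureEquiv (α := ProbabilityMeasure (PathSp X))).symm (P y))
          ((LevyProkhorov.toMeasureEquiv (α := ProbabilityMeasure (PathSp X))).symm (P x))
        = (levyProkhorovEDist (Φ y) (Φ x)).toReal := rfl
      _ ≤ (levyProkhorovEDist (μm y) (μm x) + levyProkhorovEDist (μ2 y) (μ2 x)).toReal :=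
          ENNReal.toReal_mono (ENNReal.add_ne_top.mpr ⟨hne1, hne2⟩) hedist
      _ = (levyProkhorovEDist (μm y) (μm x)).toReal
            + (levyProkhorovEDist (μ2 y) (μ2 x)).toReal := ENNReal.toReal_add hne1 hne2
      _ = dist ((S (frontF m y)).1) ((S (frontF m x)).1)
            + dist ((s₂ (backF m y)).1) ((s₂ (backF m x)).1) := rfl
      _ < ε / 2 + ε / 2 := add_lt_add h1 h2
      _ = ε := add_halves ε
  · -- distributed on good paths
    intro x
    obtain ⟨T₁, hT₁g, hT₁1⟩ := hS.2 (frontF m x)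
    obtain ⟨T₂, hT₂g, hT₂1⟩ := hs₂.2 (backF m x)
    haveI := instμm x; haveI := instμ2 x
    refine ⟨(T₁ ×ˢ T₂).image F, ?_, ?_⟩
    · intro χ hχ
      obtain ⟨p, hp, rfl⟩ := Finset.mem_image.mp (Finset.mem_coe.mp hχ)
      obtain ⟨hp1, hp2⟩ := Finset.mem_product.mp hp
      have hφg : ∀ j : Fin m, p.1 (tpt m j) = x j.castSucc := hT₁g hp1
      have hψg : ∀ j : Fin 2, p.2 (tpt 2 j) = backF m x j := hT₂g hp2
      have hψ0 : p.2 (tpt 2 (0 : Fin 2)) = x ⟨m - 1, by omega⟩ := by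
        rw [hψg 0]; simp [backF]
      have hψ1 : p.2 (tpt 2 (1 : Fin 2)) = x (Fin.last m) := by
        rw [hψg 1]; simp [backF]
      exact (concat_good m hm x p.1 p.2 hφg hψ0 hψ1).2
    · show Bmeas.meas (S' x) (((T₁ ×ˢ T₂).image F : Finset (PathSp X)) : Set (PathSp X)) = 1
      refine prob_coe_one.mpr ?_
      have hcongr : Φ x = mix (μm x) (μ2 x) T₁ T₂ F :=
        mix_congr _ _ (hSw1 x) (prob_coe_one.mp hT₁1) (hsw1 x) (prob_coe_one.mp hT₂1) F
      show Φ x _ = 1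
      rw [hcongr]
      exact mix_image_one _ _ (prob_coe_one.mp hT₁1) (prob_coe_one.mp hT₂1) F

end StepNav


lemma exists_nav {X : Type*} [MetricSpace X] (k : ℕ)
    (s₂ : (Fin 2 → X) → Bmeas (k + 1) (PathSp X)) (h₂ : IsNavAlg 2 (k + 1) s₂) :
    ∀ m, 2 ≤ m → ∃ s : (Fin m → X) → Bmeas ((k + 1) ^ (m - 1)) (PathSp X),
      IsNavAlg m ((k + 1) ^ (m - 1)) s := by
  intro m hm
  induction m, hm using Nat.le_induction with
  | base =>
    rw [show (k + 1) ^ (2 - 1) = k + 1 by norm_num]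
    exact ⟨s₂, h₂⟩
  | succ n hn ih =>
    obtain ⟨s, hs⟩ := ih
    obtain ⟨s', hs'⟩ := step_nav n ((k + 1) ^ (n - 1)) k hn s hs s₂ h₂
    have he : (k + 1) ^ (n - 1) * (k + 1) = (k + 1) ^ (n + 1 - 1) := by
      rw [Nat.add_sub_cancel, ← pow_succ]
      congr 1
      omega
    rw [← he]
    exact ⟨s', hs'⟩

/-- For every `m ≥ 2` and path-connected metric space `X`,
`dTC_m(X) ≤ (dTC(X) + 1)^{m-1} - 1`, where `dTC = dTC_2`. -/
theorem dTC_le_pow (m : ℕ) (hm : 2 ≤ m) (X : Type) [MetricSpace X] [PathConnectedSpace X] :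
    dTC m X ≤ (dTC 2 X + 1) ^ (m - 1) - 1 := by
  by_cases htop : dTC 2 X = ⊤
  · rw [htop]
    have h1 : ((⊤ : ℕ∞) + 1) ^ (m - 1) - 1 = ⊤ := by
      rw [top_add]
      rw [ENat.top_pow (by omega : m - 1 ≠ 0)]
      rfl
    rw [h1]
    exact le_top
  · have hne : {c : ℕ∞ | ∃ k : ℕ, c = k ∧
        ∃ s : (Fin 2 → X) → Bmeas (k + 1) (PathSp X), IsNavAlg 2 (k + 1) s}.Nonempty := by
      by_contra h
      rw [Set.not_nonempty_iff_eq_empty] at h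
      exact htop (by rw [dTC, h, sInf_empty])
    have hmem : dTC 2 X ∈ {c : ℕ∞ | ∃ k : ℕ, c = k ∧
        ∃ s : (Fin 2 → X) → Bmeas (k + 1) (PathSp X), IsNavAlg 2 (k + 1) s} := by
      rw [dTC]
      exact csInf_mem hne
    obtain ⟨k, hk, s₂, hs₂⟩ := hmem
    obtain ⟨s, hs⟩ := exists_nav k s₂ hs₂ m hm
    have hpow1 : 1 ≤ (k + 1) ^ (m - 1) := Nat.one_le_pow _ _ (by omega)
    have hmem2 : (((k + 1) ^ (m - 1) - 1 : ℕ) : ℕ∞) ∈ {c : ℕ∞ | ∃ k' : ℕ, c = k' ∧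
        ∃ s' : (Fin m → X) → Bmeas (k' + 1) (PathSp X), IsNavAlg m (k' + 1) s'} := by
      refine ⟨(k + 1) ^ (m - 1) - 1, rfl, ?_⟩
      have h2 : (k + 1) ^ (m - 1) - 1 + 1 = (k + 1) ^ (m - 1) := by omega
      rw [h2]
      exact ⟨s, hs⟩
    have hle : dTC m X ≤ (((k + 1) ^ (m - 1) - 1 : ℕ) : ℕ∞) := by
      rw [dTC]
      exact sInf_le hmem2
    refine hle.trans ?_
    rw [hk]
    have hcast : ((k : ℕ∞) + 1) ^ (m - 1) = (((k + 1) ^ (m - 1) : ℕ) : ℕ∞) := by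
      push_cast
      ring
    rw [hcast]
    exact_mod_cast le_refl ((k + 1) ^ (m - 1) - 1)
end Mix
end
end
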